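/- arXiv:1103.2440 — 8 statements merged into one kernel-verified Lean document; each statement's English description precedes it below -/
import Mathlib

section
/- Let S and V be real inner product spaces, let d : S → V and J : S → S be linear maps with ⟪J w, w⟫ = 0 for every w ∈ S, and let f, c ∈ ℝ. Suppose u : ℝ → S and η : ℝ → V are differentiable and satisfy, for every t ∈ ℝ: ⟪u'(t), w⟫ + f ⟪J u(t), w⟫ − c² ⟪η(t), d w⟫ = 0 for all w ∈ S, and ⟪η'(t), α⟫ + ⟪d u(t), α⟫ = 0 for all α ∈ V. Then the energy H(t) = ½(‖u(t)‖² + c² ‖η(t)‖²) is constant in t. -/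
open RealInnerProductSpace

/-- **Energy conservation for the semidiscrete mixed formulation of the
linear rotating shallow-water equations.**
If `d : S → V` is the discrete divergence, `J : S → S` is a skew operation
(`⟪J w, w⟫ = 0`), and differentiable `u : ℝ → S`, `η : ℝ → V` satisfy the
semidiscrete momentum and continuity equations for all test functions,
then the energy `H(t) = ½(‖u(t)‖² + c²‖η(t)‖²)` is constant in time. -/
theorem energy_conservation
    {S V : Type*} [NormedAddCommGroup S] [InnerProductSpace ℝ S]
    [NormedAddCommGroup V] [InnerProductSpace ℝ V]
    (d : S →ₗ[ℝ] V) (J : S →ₗ[ℝ] S)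
    (hJ : ∀ w : S, ⟪J w, w⟫ = 0)
    (f c : ℝ)
    (u : ℝ → S) (η : ℝ → V) (u' : ℝ → S) (η' : ℝ → V)
    (hu : ∀ t : ℝ, HasDerivAt u (u' t) t)
    (hη : ∀ t : ℝ, HasDerivAt η (η' t) t)
    (hmom : ∀ t : ℝ, ∀ w : S,
      ⟪u' t, w⟫ + f * ⟪J (u t), w⟫ - c ^ 2 * ⟪η t, d w⟫ = 0)
    (hcont : ∀ t : ℝ, ∀ α : V,
      ⟪η' t, α⟫ + ⟪d (u t), α⟫ = 0) :
    ∀ t₁ t₂ : ℝ,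
      (1 / 2 : ℝ) * (‖u t₁‖ ^ 2 + c ^ 2 * ‖η t₁‖ ^ 2) =
      (1 / 2 : ℝ) * (‖u t₂‖ ^ 2 + c ^ 2 * ‖η t₂‖ ^ 2) := by
  have key : ∀ t : ℝ, HasDerivAt
      (fun t => ⟪u t, u t⟫ + c ^ 2 * ⟪η t, η t⟫) 0 t := by
    intro t
    have h1 : HasDerivAt (fun t => ⟪u t, u t⟫)
        (⟪u t, u' t⟫ + ⟪u' t, u t⟫) t := (hu t).inner ℝ (hu t)
    have h2 : HasDerivAt (fun t => ⟪η t, η t⟫)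
        (⟪η t, η' t⟫ + ⟪η' t, η t⟫) t := (hη t).inner ℝ (hη t)
    have h3 := h1.add (h2.const_mul (c ^ 2))
    convert h3 using 1
    · rfl
    · rfl
    · rfl
    have hm := hmom t (u t)
    have hc := hcont t (η t)
    have hJt := hJ (u t)
    have s1 : ⟪u t, u' t⟫ = ⟪u' t, u t⟫ := real_inner_comm _ _
    have s2 : ⟪η t, η' t⟫ = ⟪η' t, η t⟫ := real_inner_comm _ _
    have s3 : ⟪d (u t), η t⟫ = ⟪η t, d (u t)⟫ := real_inner_comm _ _
    rw [s1, s2]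
    linear_combination (-2 : ℝ) * hm + (-2 * c ^ 2) * hc
      + 2 * f * hJt + 2 * c ^ 2 * s3
  intro t₁ t₂
  have h := is_const_of_deriv_eq_zero
      (f := fun t => (⟪u t, u t⟫ + c ^ 2 * ⟪η t, η t⟫ : ℝ))
      (fun t => (key t).differentiableAt)
      (fun t => (key t).deriv) t₁ t₂
  have e1 : ∀ t : ℝ, (‖u t‖ ^ 2 : ℝ) = ⟪u t, u t⟫ :=
    fun t => (real_inner_self_eq_norm_sq _).symm
  have e2 : ∀ t : ℝ, (‖η t‖ ^ 2 : ℝ) = ⟪η t, η t⟫ :=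
    fun t => (real_inner_self_eq_norm_sq _).symm
  rw [e1, e2, e1, e2, h]
end

section
/- If p : ℝ² → ℝ is a polynomial function of total degree at most 3 that vanishes at every point of each of the three edges e₁, e₂, e₃ of the triangle K and satisfies p((v₁ + v₂ + v₃)/3) = 1, then p = 27 λ₁ λ₂ λ₃ identically on ℝ². In particular, the cubic bubble function B = 27 λ₁ λ₂ λ₃ is the unique cubic polynomial taking the value 1 at the barycentre of K and vanishing on all three edges of K. -/
noncomputable section

/-- Evaluation of a two-variable polynomial at a point of `ℝ²`. -/
def pev (P : MvPolynomial (Fin 2) ℝ) (x : ℝ × ℝ) : ℝ :=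
  MvPolynomial.eval ![x.1, x.2] P

open Polynomial

lemma natDegree_lin_le (a b : ℝ) : (C a + C b * X).natDegree ≤ 1 := by
  refine (natDegree_add_le _ _).trans ?_
  simp only [natDegree_C, max_le_iff]
  exact ⟨Nat.zero_le _, (natDegree_mul_le).trans (by simp)⟩

lemma pev_lineMap (P : MvPolynomial (Fin 2) ℝ) (a b : ℝ × ℝ) :
    ∃ Q : Polynomial ℝ, Q.natDegree ≤ P.totalDegree ∧
      ∀ t : ℝ, Q.eval t = pev P (AffineMap.lineMap a b t) := by
  classical
  set f : Fin 2 → Polynomial ℝ :=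
    ![C a.1 + C (b.1 - a.1) * X, C a.2 + C (b.2 - a.2) * X] with hf
  refine ⟨MvPolynomial.aeval f P, ?_, ?_⟩
  · conv_lhs => rw [P.as_sum]
    rw [map_sum]
    apply natDegree_sum_le_of_forall_le
    intro m hm
    rw [MvPolynomial.aeval_monomial]
    refine natDegree_mul_le.trans ?_
    have h1 : (algebraMap ℝ (Polynomial ℝ) (MvPolynomial.coeff m P)).natDegree = 0 :=
      natDegree_C _
    rw [h1, zero_add]
    refine (natDegree_prod_le _ _).trans ?_
    have step : ∀ i ∈ m.support, ((f i) ^ (m i)).natDegree ≤ m i := by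
      intro i _
      refine natDegree_pow_le.trans ?_
      have : (f i).natDegree ≤ 1 := by
        fin_cases i
        · simpa only [hf, Fin.zero_eta, Matrix.cons_val_zero] using natDegree_lin_le a.1 (b.1 - a.1)
        · simpa only [hf, Fin.mk_one, Matrix.cons_val_one, Matrix.head_cons, Matrix.cons_val_zero] using
            natDegree_lin_le a.2 (b.2 - a.2)
      calc m i * (f i).natDegree ≤ m i * 1 := Nat.mul_le_mul_left _ this
        _ = m i := mul_one _
    calc (∑ i ∈ m.support, ((fun i k => f i ^ k) i (m i)).natDegree)
        ≤ ∑ i ∈ m.support, m i := Finset.sum_le_sum step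
      _ ≤ P.totalDegree := MvPolynomial.le_totalDegree hm
  · intro t
    have key := MvPolynomial.eval₂_comp_left (Polynomial.evalRingHom t)
      (algebraMap ℝ (Polynomial ℝ)) f P
    have : Polynomial.eval t (MvPolynomial.aeval f P)
        = MvPolynomial.eval (fun i => (f i).eval t) P := by
      rw [MvPolynomial.aeval_def]
      rw [show Polynomial.eval t (MvPolynomial.eval₂ (algebraMap ℝ (Polynomial ℝ)) f P)
          = (Polynomial.evalRingHom t) (MvPolynomial.eval₂ (algebraMap ℝ (Polynomial ℝ)) f P)
          from rfl, key]
      rw [MvPolynomial.eval]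
      congr 1
      ext x : 1
      simp
    have harg : (fun i => Polynomial.eval t (f i))
        = ![((AffineMap.lineMap a b) t).1, ((AffineMap.lineMap a b) t).2] := by
      funext i
      fin_cases i <;>
        simp [hf, AffineMap.lineMap_apply_module, Prod.smul_def] <;> ring
    rw [this, pev, harg]

lemma dense_affine_ne (f : (ℝ × ℝ) →ᵃ[ℝ] ℝ) {a b : ℝ × ℝ} (hab : f a ≠ f b) (c : ℝ) :
    Dense {x : ℝ × ℝ | f x ≠ c} := by
  intro x
  by_cases hx : f x = c
  · have hcont : Continuous fun s : ℝ => x + s • (b - a) := by continuity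
    have htend : Filter.Tendsto (fun n : ℕ => x + (1 / (n + 1) : ℝ) • (b - a))
        Filter.atTop (nhds x) := by
      have h0 : Filter.Tendsto (fun n : ℕ => (1 / (n + 1) : ℝ)) Filter.atTop (nhds 0) :=
        tendsto_one_div_add_atTop_nhds_zero_nat
      have := (hcont.tendsto 0).comp h0
      simpa [Function.comp_def] using this
    refine mem_closure_of_tendsto htend (Filter.Eventually.of_forall fun n => ?_)
    show f (x + (1 / (n + 1) : ℝ) • (b - a)) ≠ c
    have hfa : f (x + (1 / (n + 1) : ℝ) • (b - a))
        = f x + (1 / (n + 1) : ℝ) * (f b - f a) := by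
      have h1 : f ((1 / (n + 1) : ℝ) • (b - a) +ᵥ x)
          = f.linear ((1 / (n + 1) : ℝ) • (b - a)) +ᵥ f x := f.map_vadd _ _
      have h2 : f.linear (b - a) = f b - f a := f.linearMap_vsub b a
      simp only [vadd_eq_add, map_smul, h2, smul_eq_mul] at h1
      rw [show x + (1 / (n + 1) : ℝ) • (b - a) = (1 / (n + 1) : ℝ) • (b - a) + x by abel, h1]
      ring
    rw [hfa, hx]
    have hne : f b - f a ≠ 0 := sub_ne_zero.2 (Ne.symm hab)
    have hpos : (1 / (n + 1) : ℝ) ≠ 0 := by positivity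
    intro h
    apply hne
    have h0 : (1 / (n + 1) : ℝ) * (f b - f a) = 0 := by
      have := h
      linarith
    exact (mul_eq_zero.1 h0).resolve_left hpos
  · exact subset_closure hx
/-- **Uniqueness of the cubic bubble function.**
Let `v 0, v 1, v 2 ∈ ℝ²` be affinely independent with barycentric coordinate
functions `lam i` (the unique affine functions with `lam i (v j) = δᵢⱼ`).
If a polynomial function `p` of total degree at most 3 vanishes on each of the
three edges of the triangle and takes the value 1 at the barycentre
`(v 0 + v 1 + v 2)/3`, then `p = 27 λ₀ λ₁ λ₂` identically on `ℝ²`. -/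
theorem cubic_bubble_unique
    (v : Fin 3 → ℝ × ℝ) (hv : AffineIndependent ℝ v)
    (lam : Fin 3 → (ℝ × ℝ) →ᵃ[ℝ] ℝ)
    (hlam : ∀ i j : Fin 3, lam i (v j) = if i = j then 1 else 0)
    (P : MvPolynomial (Fin 2) ℝ) (hdeg : P.totalDegree ≤ 3)
    (hedge : ∀ i : Fin 3, ∀ x ∈ segment ℝ (v (i + 1)) (v (i + 2)), pev P x = 0)
    (hbary : pev P ((1 / 3 : ℝ) • (v 0 + v 1 + v 2)) = 1) :
    ∀ x : ℝ × ℝ, pev P x = 27 * lam 0 x * lam 1 x * lam 2 x := by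
  classical
  have hcard : Fintype.card (Fin 3) = Module.finrank ℝ (ℝ × ℝ) + 1 := by
    simp
  have htop : affineSpan ℝ (Set.range v) = ⊤ :=
    hv.affineSpan_eq_top_iff_card_eq_finrank_add_one.2 hcard
  let B : AffineBasis (Fin 3) ℝ (ℝ × ℝ) := ⟨v, hv, htop⟩
  have hBv : ∀ j, B j = v j := fun j => rfl
  -- lam agrees with barycentric coordinates
  have hlc : ∀ (i : Fin 3) (x : ℝ × ℝ), lam i x = B.coord i x := by
    intro i x
    have hs : ∑ j, B.coord j x = 1 := B.sum_coord_apply_eq_one x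
    have hx : (Finset.univ.affineCombination ℝ v fun j => B.coord j x) = x := by
      rw [Finset.univ.affineCombination_eq_linear_combination v _ hs]
      exact B.linear_combination_coord_eq_self x
    calc lam i x = lam i (Finset.univ.affineCombination ℝ v fun j => B.coord j x) := by
          rw [hx]
      _ = Finset.univ.affineCombination ℝ (⇑(lam i) ∘ v) (fun j => B.coord j x) :=
          Finset.univ.map_affineCombination v _ hs (lam i)
      _ = ∑ j, B.coord j x • (lam i (v j)) := by
          rw [Finset.univ.affineCombination_eq_linear_combination _ _ hs]
          rfl
      _ = B.coord i x := by
          simp [hlam]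

  -- the barycentre
  set b : ℝ × ℝ := (1 / 3 : ℝ) • (v 0 + v 1 + v 2) with hbdef
  have hbcomb : b = Finset.univ.affineCombination ℝ v (fun _ => (1/3 : ℝ)) := by
    rw [Finset.univ.affineCombination_eq_linear_combination v _ (by
      norm_num [Fin.sum_univ_three])]
    simp [hbdef, Fin.sum_univ_three, smul_add]
  have hbc : ∀ i, B.coord i b = 1/3 := by
    intro i
    rw [hbcomb]
    exact B.coord_apply_combination_of_mem (Finset.mem_univ i)
      (by norm_num [Fin.sum_univ_three])
  -- P vanishes on the whole lines through edges
  have hline : ∀ (i : Fin 3) (t : ℝ),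
      pev P (AffineMap.lineMap (v (i+1)) (v (i+2)) t) = 0 := by
    intro i
    obtain ⟨Q, hQd, hQe⟩ := pev_lineMap P (v (i+1)) (v (i+2))
    have hQ0 : Q = 0 := by
      apply Polynomial.eq_zero_of_infinite_isRoot
      have hsub : Set.Icc (0:ℝ) 1 ⊆ {t | Q.IsRoot t} := by
        intro t ht
        show Q.eval t = 0
        rw [hQe]
        apply hedge i
        rw [segment_eq_image_lineMap]
        exact ⟨t, ht, rfl⟩
      exact Set.Infinite.mono hsub (Set.Icc_infinite (by norm_num))
    intro t
    rw [← hQe, hQ0, Polynomial.eval_zero]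
  -- P vanishes where a barycentric coordinate vanishes
  have hczero : ∀ (i : Fin 3) (x : ℝ × ℝ), B.coord i x = 0 → pev P x = 0 := by
    intro i x h0
    have hs : ∑ j, B.coord j x = 1 := B.sum_coord_apply_eq_one x
    have hrep : ∑ j, B.coord j x • v j = x := B.linear_combination_coord_eq_self x
    simp only [Fin.sum_univ_three] at hs
    have hrep3 := hrep.symm
    rw [Fin.sum_univ_three] at hrep3
    have hx : x = AffineMap.lineMap (v (i+1)) (v (i+2)) (B.coord (i+2) x) := by
      fin_cases i
      · have h0' : B.coord 0 x = 0 := h0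
        show x = AffineMap.lineMap (v 1) (v 2) (B.coord 2 x)
        conv_lhs => rw [hrep3]
        rw [AffineMap.lineMap_apply_module, h0',
          show B.coord 1 x = 1 - B.coord 2 x by rw [h0'] at hs; linarith]
        module
      · have h0' : B.coord 1 x = 0 := h0
        show x = AffineMap.lineMap (v 2) (v 0) (B.coord 0 x)
        conv_lhs => rw [hrep3]
        rw [AffineMap.lineMap_apply_module, h0',
          show B.coord 2 x = 1 - B.coord 0 x by rw [h0'] at hs; linarith]
        module
      · have h0' : B.coord 2 x = 0 := h0
        show x = AffineMap.lineMap (v 0) (v 1) (B.coord 1 x)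
        conv_lhs => rw [hrep3]
        rw [AffineMap.lineMap_apply_module, h0',
          show B.coord 0 x = 1 - B.coord 1 x by rw [h0'] at hs; linarith]
        module
    rw [hx]
    exact hline i _
  -- main pointwise identity on the good set
  have hgood : ∀ x : ℝ × ℝ, (∀ i, B.coord i x ≠ 1/3) →
      (∀ i : Fin 3, B.coord (i+1) x ≠ B.coord (i+2) x) →
      pev P x = 27 * B.coord 0 x * B.coord 1 x * B.coord 2 x := by
    intro x h13 hpair
    obtain ⟨Q, hQd, hQe⟩ := pev_lineMap P b x
    set c : Fin 3 → ℝ := fun i => B.coord i x with hcdef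
    set R : Polynomial ℝ := Polynomial.C 27 *
      ∏ i : Fin 3, (Polynomial.C (1/3 : ℝ) + Polynomial.C (c i - 1/3) * Polynomial.X) with hRdef
    have hRdeg : R.natDegree ≤ 3 := by
      refine Polynomial.natDegree_mul_le.trans ?_
      rw [Polynomial.natDegree_C, zero_add]
      refine (Polynomial.natDegree_prod_le _ _).trans ?_
      have hbnd : ∀ i ∈ (Finset.univ : Finset (Fin 3)),
          (Polynomial.C (1/3:ℝ) + Polynomial.C (c i - 1/3) * Polynomial.X).natDegree ≤ 1 :=
        fun i _ => natDegree_lin_le _ _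
      calc ∑ i : Fin 3, (Polynomial.C (1/3:ℝ) + Polynomial.C (c i - 1/3) * Polynomial.X).natDegree
          ≤ ∑ _i : Fin 3, 1 :=
            Finset.sum_le_sum
              (f := fun i => (Polynomial.C (1/3:ℝ) + Polynomial.C (c i - 1/3) * Polynomial.X).natDegree)
              (g := fun _ => 1) hbnd
        _ = 3 := by simp
    have hReval : ∀ t : ℝ, R.eval t = 27 * ∏ i : Fin 3, (1/3 + (c i - 1/3) * t) := by
      intro t
      simp [hRdef, Polynomial.eval_prod]
    have hcl : ∀ (i : Fin 3) (t : ℝ),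
        B.coord i (AffineMap.lineMap b x t) = 1/3 + (c i - 1/3) * t := by
      intro i t
      rw [(B.coord i).apply_lineMap, AffineMap.lineMap_apply_module', hbc i]
      simp only [smul_eq_mul, hcdef]
      ring
    have hden : ∀ i : Fin 3, (1/3 : ℝ) - c i ≠ 0 := fun i => sub_ne_zero.2 (Ne.symm (h13 i))
    set tt : Fin 3 → ℝ := fun i => (1/3 : ℝ) / (1/3 - c i) with httdef
    have htt0 : ∀ i, tt i ≠ 0 := fun i => div_ne_zero (by norm_num) (hden i)
    have httne : ∀ i j : Fin 3, c i ≠ c j → tt i ≠ tt j := by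
      intro i j hcij h
      apply hcij
      simp only [httdef] at h
      have h2 := (div_eq_div_iff (hden i) (hden j)).1 h
      linarith
    have hc01 : c 0 ≠ c 1 := hpair 2
    have hc12 : c 1 ≠ c 2 := hpair 0
    have hc02 : c 0 ≠ c 2 := Ne.symm (hpair 1)
    set D := Q - R with hDdef
    have hDdeg : D.natDegree ≤ 3 :=
      (Polynomial.natDegree_sub_le _ _).trans (max_le (hQd.trans hdeg) hRdeg)
    have hD0 : D.eval 0 = 0 := by
      rw [hDdef, Polynomial.eval_sub, hQe, AffineMap.lineMap_apply_zero, hbary, hReval]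
      norm_num [Fin.prod_univ_three]
    have hDt : ∀ i : Fin 3, D.eval (tt i) = 0 := by
      intro i
      have hzero : (1/3 : ℝ) + (c i - 1/3) * tt i = 0 := by
        have htti : tt i = (1/3 : ℝ) / (1/3 - c i) := rfl
        calc (1/3 : ℝ) + (c i - 1/3) * tt i
            = 1/3 - ((1/3 : ℝ) / (1/3 - c i) * (1/3 - c i)) := by rw [htti]; ring
          _ = 1/3 - 1/3 := by rw [div_mul_cancel₀ _ (hden i)]
          _ = 0 := by ring
      rw [hDdef, Polynomial.eval_sub, hQe, hReval,
        hczero i _ (by rw [hcl i]; exact hzero),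
        Finset.prod_eq_zero (Finset.mem_univ i) hzero]
      ring
    have hcard4 : ({0, tt 0, tt 1, tt 2} : Finset ℝ).card = 4 := by
      have n0 : (0:ℝ) ∉ ({tt 0, tt 1, tt 2} : Finset ℝ) := by
        simp only [Finset.mem_insert, Finset.mem_singleton]
        push_neg
        exact ⟨(htt0 0).symm, (htt0 1).symm, (htt0 2).symm⟩
      have n1 : tt 0 ∉ ({tt 1, tt 2} : Finset ℝ) := by
        simp only [Finset.mem_insert, Finset.mem_singleton]
        push_neg
        exact ⟨httne 0 1 hc01, httne 0 2 hc02⟩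
      have n2 : tt 1 ∉ ({tt 2} : Finset ℝ) := by
        simp only [Finset.mem_singleton]
        exact httne 1 2 hc12
      rw [Finset.card_insert_of_notMem n0, Finset.card_insert_of_notMem n1,
        Finset.card_insert_of_notMem n2, Finset.card_singleton]
    have hDzero : D = 0 := by
      apply Polynomial.eq_zero_of_natDegree_lt_card_of_eval_eq_zero' D {0, tt 0, tt 1, tt 2}
      · intro t ht
        simp only [Finset.mem_insert, Finset.mem_singleton] at ht
        rcases ht with rfl | rfl | rfl | rfl
        exacts [hD0, hDt 0, hDt 1, hDt 2]
      · rw [hcard4]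
        omega
    have h1 : Q.eval 1 = R.eval 1 := by
      have h2 := congrArg (Polynomial.eval 1) hDzero
      rw [hDdef, Polynomial.eval_sub, Polynomial.eval_zero] at h2
      linarith
    calc pev P x = Q.eval 1 := by rw [hQe 1, AffineMap.lineMap_apply_one]
      _ = R.eval 1 := h1
      _ = 27 * c 0 * c 1 * c 2 := by
          rw [hReval]
          rw [Fin.prod_univ_three]
          ring
  -- density and continuity
  have hdense : Dense ((⋂ i : Fin 3, {x : ℝ × ℝ | B.coord i x ≠ 1/3}) ∩
      (⋂ i : Fin 3, {x : ℝ × ℝ | B.coord (i+1) x ≠ B.coord (i+2) x})) := by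
    have hop : ∀ (f : (ℝ × ℝ) →ᵃ[ℝ] ℝ) (c : ℝ), IsOpen {x : ℝ × ℝ | f x ≠ c} := by
      intro f c
      have : IsClosed {x : ℝ × ℝ | f x = c} :=
        isClosed_eq f.continuous_of_finiteDimensional continuous_const
      exact this.isOpen_compl
    have hne : ∀ i : Fin 3, (1:ℝ) ≠ 0 := fun _ => one_ne_zero
    have hcoordv : ∀ i j : Fin 3, B.coord i (v j) = if i = j then 1 else 0 := by
      intro i j
      exact B.coord_apply i j
    have hd1 : ∀ i : Fin 3, Dense {x : ℝ × ℝ | B.coord i x ≠ 1/3} := by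
      intro i
      apply dense_affine_ne (B.coord i) (a := v i) (b := v (i+1))
      rw [hcoordv i i, hcoordv i (i+1)]
      have : i ≠ i + 1 := by fin_cases i <;> decide
      simp [this]
    have hd2 : ∀ i : Fin 3,
        Dense {x : ℝ × ℝ | B.coord (i+1) x ≠ B.coord (i+2) x} := by
      intro i
      have heq : {x : ℝ × ℝ | B.coord (i+1) x ≠ B.coord (i+2) x}
          = {x : ℝ × ℝ | (B.coord (i+1) - B.coord (i+2)) x ≠ 0} := by
        ext y
        simp [AffineMap.coe_sub, sub_ne_zero]
      rw [heq]
      apply dense_affine_ne (B.coord (i+1) - B.coord (i+2))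
        (a := v (i+1)) (b := v (i+2))
      have h12 : i + 1 ≠ i + 2 := by fin_cases i <;> decide
      simp [AffineMap.coe_sub, hcoordv, h12, h12.symm]
      norm_num
    have ho1 : IsOpen (⋂ i : Fin 3, {x : ℝ × ℝ | B.coord i x ≠ 1/3}) :=
      isOpen_iInter_of_finite fun i => hop _ _
    have hdi1 : Dense (⋂ i : Fin 3, {x : ℝ × ℝ | B.coord i x ≠ 1/3}) :=
      dense_iInter_of_isOpen (fun i => hop _ _) hd1
    have hdi2 : Dense (⋂ i : Fin 3, {x : ℝ × ℝ | B.coord (i+1) x ≠ B.coord (i+2) x}) := by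
      apply dense_iInter_of_isOpen
      · intro i
        have heq : {x : ℝ × ℝ | B.coord (i+1) x ≠ B.coord (i+2) x}
            = {x : ℝ × ℝ | (B.coord (i+1) - B.coord (i+2)) x ≠ 0} := by
          ext y
          simp [AffineMap.coe_sub, sub_ne_zero]
        rw [heq]
        exact hop _ _
      · exact hd2
    exact hdi1.inter_of_isOpen_left hdi2 ho1
  have hcont : Continuous (fun x : ℝ × ℝ => pev P x) := by
    have h1 : Continuous fun x : ℝ × ℝ => (![x.1, x.2] : Fin 2 → ℝ) := by
      apply continuous_pi
      intro i
      fin_cases i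
      · simpa using continuous_fst
      · simpa using continuous_snd
    exact (MvPolynomial.continuous_eval P).comp h1
  have hcont2 : Continuous (fun x : ℝ × ℝ =>
      27 * B.coord 0 x * B.coord 1 x * B.coord 2 x) := by
    have hc : ∀ i : Fin 3, Continuous (fun x : ℝ × ℝ => B.coord i x) :=
      fun i => (B.coord i).continuous_of_finiteDimensional
    fun_prop
  have hext := Continuous.ext_on hdense hcont hcont2 (by
    rintro x ⟨hx1, hx2⟩
    simp only [Set.mem_iInter, Set.mem_setOf_eq] at hx1 hx2
    exact hgood x hx1 hx2)
  intro x
  rw [hlc 0 x, hlc 1 x, hlc 2 x]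
  exact congrFun hext x
end
end

section
/- Let B = λ₁ λ₂ λ₃. Then both components of the skew gradient ∇⊥B = (−∂B/∂x₂, ∂B/∂x₁) are polynomial functions of total degree at most 2, and for each i ∈ {1,2,3} and every x ∈ eᵢ one has ∇⊥B(x) · nᵢ = 0. (That is, ∇⊥B belongs to the local interior space Ŝ(K) = {v ∈ P₂(K)² : v·n = 0 on ∂K}.) -/
noncomputable section

/-- Dot product on `ℝ²`. -/
def dot (a b : ℝ × ℝ) : ℝ := a.1 * b.1 + a.2 * b.2

/-- Skew gradient `∇⊥g = (−∂g/∂x₂, ∂g/∂x₁)` of `g : ℝ² → ℝ`. -/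
def perpGrad (g : ℝ × ℝ → ℝ) (x : ℝ × ℝ) : ℝ × ℝ :=
  (-(fderiv ℝ g x (0, 1)), fderiv ℝ g x (1, 0))

/-- **The skew gradient of the cubic bubble lies in the local interior space
`Ŝ(K)`.** Let `v 0, v 1, v 2` be affinely independent, `lam i` the barycentric
coordinates, `n i` a unit normal to the edge `e i` opposite `v i`, and
`B = λ₀ λ₁ λ₂`. Then both components of `∇⊥B` are polynomial functions of
total degree at most 2, and `∇⊥B · n i = 0` at every point of each edge `e i`. -/
theorem perpGrad_bubble_mem_interior_space
    (v : Fin 3 → ℝ × ℝ) (hv : AffineIndependent ℝ v)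
    (lam : Fin 3 → (ℝ × ℝ) →ᵃ[ℝ] ℝ)
    (hlam : ∀ i j : Fin 3, lam i (v j) = if i = j then 1 else 0)
    (n : Fin 3 → ℝ × ℝ)
    (hn_unit : ∀ i : Fin 3, (n i).1 ^ 2 + (n i).2 ^ 2 = 1)
    (hn_normal : ∀ i : Fin 3, dot (n i) (v (i + 2) - v (i + 1)) = 0)
    (B : ℝ × ℝ → ℝ) (hB : ∀ x : ℝ × ℝ, B x = lam 0 x * lam 1 x * lam 2 x) :
    (∃ P Q : MvPolynomial (Fin 2) ℝ, P.totalDegree ≤ 2 ∧ Q.totalDegree ≤ 2 ∧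
      ∀ x : ℝ × ℝ, perpGrad B x = (pev P x, pev Q x)) ∧
    (∀ i : Fin 3, ∀ x ∈ segment ℝ (v (i + 1)) (v (i + 2)),
      dot (perpGrad B x) (n i) = 0) := by
  -- coefficients of the affine maps
  set a : Fin 3 → ℝ := fun i => lam i (0, 0) with ha
  set b : Fin 3 → ℝ := fun i => (lam i).linear (1, 0) with hb'
  set c : Fin 3 → ℝ := fun i => (lam i).linear (0, 1) with hc'
  have hval : ∀ (i : Fin 3) (x : ℝ × ℝ), lam i x = a i + b i * x.1 + c i * x.2 := by
    intro i x
    have hx : x = (x.1 • ((1:ℝ),(0:ℝ)) + x.2 • ((0:ℝ),(1:ℝ))) +ᵥ ((0:ℝ),(0:ℝ)) := by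
      simp [Prod.ext_iff]
    conv_lhs => rw [hx, AffineMap.map_vadd, map_add, map_smul, map_smul]
    simp only [smul_eq_mul, vadd_eq_add, ha, hb', hc']
    ring
  -- explicit form of B
  have hBexp : B = fun x : ℝ × ℝ =>
      (a 0 + b 0 * x.1 + c 0 * x.2) * (a 1 + b 1 * x.1 + c 1 * x.2) *
        (a 2 + b 2 * x.1 + c 2 * x.2) := by
    funext x; rw [hB, hval, hval, hval]
  -- derivative of each affine factor
  have hg : ∀ (i : Fin 3) (x : ℝ × ℝ),
      HasFDerivAt (fun x : ℝ × ℝ => a i + b i * x.1 + c i * x.2)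
        (b i • ContinuousLinearMap.fst ℝ ℝ ℝ + c i • ContinuousLinearMap.snd ℝ ℝ ℝ) x := by
    intro i x
    exact ((hasFDerivAt_fst.const_mul (b i)).const_add (a i)).add
      (hasFDerivAt_snd.const_mul (c i))
  -- the skew gradient formula
  have hPG : ∀ x : ℝ × ℝ, perpGrad B x =
      (-(lam 0 x * lam 1 x * c 2 + lam 2 x * lam 0 x * c 1 + lam 2 x * lam 1 x * c 0),
        lam 0 x * lam 1 x * b 2 + lam 2 x * lam 0 x * b 1 + lam 2 x * lam 1 x * b 0) := by
    intro x
    have hF : HasFDerivAt B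
        (((a 0 + b 0 * x.1 + c 0 * x.2) * (a 1 + b 1 * x.1 + c 1 * x.2)) •
            (b 2 • ContinuousLinearMap.fst ℝ ℝ ℝ + c 2 • ContinuousLinearMap.snd ℝ ℝ ℝ) +
          (a 2 + b 2 * x.1 + c 2 * x.2) •
            ((a 0 + b 0 * x.1 + c 0 * x.2) •
                (b 1 • ContinuousLinearMap.fst ℝ ℝ ℝ + c 1 • ContinuousLinearMap.snd ℝ ℝ ℝ) +
              (a 1 + b 1 * x.1 + c 1 * x.2) •
                (b 0 • ContinuousLinearMap.fst ℝ ℝ ℝ + c 0 • ContinuousLinearMap.snd ℝ ℝ ℝ))) x := by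
      rw [hBexp]
      exact ((hg 0 x).mul (hg 1 x)).mul (hg 2 x)
    rw [perpGrad, hF.fderiv]
    simp only [ContinuousLinearMap.add_apply, ContinuousLinearMap.smul_apply,
      ContinuousLinearMap.coe_fst', ContinuousLinearMap.coe_snd', smul_eq_mul]
    rw [hval 0 x, hval 1 x, hval 2 x]
    exact Prod.ext (by ring) (by ring)
  constructor
  · -- polynomial part
    set L : Fin 3 → MvPolynomial (Fin 2) ℝ := fun i =>
      MvPolynomial.C (a i) + MvPolynomial.C (b i) * MvPolynomial.X 0 +
        MvPolynomial.C (c i) * MvPolynomial.X 1 with hL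
    have hLdeg : ∀ i, (L i).totalDegree ≤ 1 := by
      intro i
      refine le_trans (MvPolynomial.totalDegree_add _ _) (max_le
        (le_trans (MvPolynomial.totalDegree_add _ _) (max_le ?_ ?_)) ?_)
      · simp [MvPolynomial.totalDegree_C]
      · refine le_trans (MvPolynomial.totalDegree_mul _ _) ?_
        simp [MvPolynomial.totalDegree_C, MvPolynomial.totalDegree_X]
      · refine le_trans (MvPolynomial.totalDegree_mul _ _) ?_
        simp [MvPolynomial.totalDegree_C, MvPolynomial.totalDegree_X]
    have hprod : ∀ (r : ℝ) (i j : Fin 3),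
        (MvPolynomial.C r * L i * L j).totalDegree ≤ 2 := by
      intro r i j
      calc (MvPolynomial.C r * L i * L j).totalDegree
          ≤ (MvPolynomial.C r * L i).totalDegree + (L j).totalDegree :=
            MvPolynomial.totalDegree_mul _ _
        _ ≤ ((MvPolynomial.C r).totalDegree + (L i).totalDegree) + (L j).totalDegree :=
            Nat.add_le_add_right (MvPolynomial.totalDegree_mul _ _) _
        _ ≤ (0 + 1) + 1 :=
            add_le_add (add_le_add (le_of_eq (MvPolynomial.totalDegree_C r)) (hLdeg i)) (hLdeg j)
        _ = 2 := by norm_num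
    have hLev : ∀ (i : Fin 3) (x : ℝ × ℝ), pev (L i) x = a i + b i * x.1 + c i * x.2 := by
      intro i x
      simp [pev, hL]
    refine ⟨-(MvPolynomial.C (c 2) * L 0 * L 1 + MvPolynomial.C (c 1) * L 2 * L 0 +
        MvPolynomial.C (c 0) * L 2 * L 1),
      MvPolynomial.C (b 2) * L 0 * L 1 + MvPolynomial.C (b 1) * L 2 * L 0 +
        MvPolynomial.C (b 0) * L 2 * L 1, ?_, ?_, ?_⟩
    · rw [MvPolynomial.totalDegree_neg]
      exact le_trans (MvPolynomial.totalDegree_add _ _) (max_le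
        (le_trans (MvPolynomial.totalDegree_add _ _) (max_le (hprod _ _ _) (hprod _ _ _)))
        (hprod _ _ _))
    · exact le_trans (MvPolynomial.totalDegree_add _ _) (max_le
        (le_trans (MvPolynomial.totalDegree_add _ _) (max_le (hprod _ _ _) (hprod _ _ _)))
        (hprod _ _ _))
    · intro x
      rw [hPG x, hval 0 x, hval 1 x, hval 2 x]
      refine Prod.ext ?_ ?_ <;>
        simp only [pev, map_neg, map_add, map_mul, MvPolynomial.eval_C, MvPolynomial.eval_X,
          Matrix.cons_val_zero, Matrix.cons_val_one, Matrix.head_cons, hL] <;>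
        ring
  · -- boundary part
    intro i x hx
    obtain ⟨s, t, hs, ht, hst, hxst⟩ := hx
    have hne12 : (i + 1 : Fin 3) ≠ i + 2 := by omega
    have hine1 : i ≠ i + 1 := by omega
    have hine2 : i ≠ i + 2 := by omega
    have hlam1 : lam i (v (i+1)) = 0 := by rw [hlam, if_neg hine1]
    have hlam2 : lam i (v (i+2)) = 0 := by rw [hlam, if_neg hine2]
    have h1' : a i + b i * (v (i+1)).1 + c i * (v (i+1)).2 = 0 := by
      rw [← hval]; exact hlam1
    have h2' : a i + b i * (v (i+2)).1 + c i * (v (i+2)).2 = 0 := by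
      rw [← hval]; exact hlam2
    -- lam i vanishes at x
    have hx1 : x.1 = s * (v (i+1)).1 + t * (v (i+2)).1 := by
      rw [← hxst]; simp
    have hx2 : x.2 = s * (v (i+1)).2 + t * (v (i+2)).2 := by
      rw [← hxst]; simp
    have hzero : lam i x = 0 := by
      rw [hval i x, hx1, hx2]
      linear_combination s * h1' + t * h2' - a i * hst
    -- the key orthogonality identity
    have hd : b i * ((v (i+2)).1 - (v (i+1)).1) + c i * ((v (i+2)).2 - (v (i+1)).2) = 0 := by
      linear_combination h2' - h1'
    have hn : (n i).1 * ((v (i+2)).1 - (v (i+1)).1) + (n i).2 * ((v (i+2)).2 - (v (i+1)).2) = 0 := by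
      have := hn_normal i
      simpa [dot, Prod.fst_sub, Prod.snd_sub] using this
    have hvne : v (i+1) ≠ v (i+2) := fun h => hne12 (hv.injective h)
    have hdne : (v (i+2)).1 - (v (i+1)).1 ≠ 0 ∨ (v (i+2)).2 - (v (i+1)).2 ≠ 0 := by
      by_contra hcon
      push_neg at hcon
      exact hvne (Prod.ext (by linarith [hcon.1]) (by linarith [hcon.2])).symm
    have hkey : b i * (n i).2 - c i * (n i).1 = 0 := by
      have hk1 : (b i * (n i).2 - c i * (n i).1) * ((v (i+2)).1 - (v (i+1)).1) = 0 := by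
        linear_combination (n i).2 * hd - c i * hn
      have hk2 : (b i * (n i).2 - c i * (n i).1) * ((v (i+2)).2 - (v (i+1)).2) = 0 := by
        linear_combination b i * hn - (n i).1 * hd
      rcases hdne with h | h
      · exact (mul_eq_zero.mp hk1).resolve_right h
      · exact (mul_eq_zero.mp hk2).resolve_right h
    rw [hPG x, dot]
    simp only
    have hi : i = 0 ∨ i = 1 ∨ i = 2 := by omega
    rcases hi with rfl | rfl | rfl
    · linear_combination (lam 1 x * lam 2 x) * hkey +
        (-(lam 1 x * c 2 + lam 2 x * c 1) * (n 0).1 + (lam 1 x * b 2 + lam 2 x * b 1) * (n 0).2) * hzero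
    · linear_combination (lam 2 x * lam 0 x) * hkey +
        (-(lam 0 x * c 2 + lam 2 x * c 0) * (n 1).1 + (lam 0 x * b 2 + lam 2 x * b 0) * (n 1).2) * hzero
    · linear_combination (lam 0 x * lam 1 x) * hkey +
        (-(lam 0 x * c 1 + lam 1 x * c 0) * (n 2).1 + (lam 0 x * b 1 + lam 1 x * b 0) * (n 2).2) * hzero
end
end

section
/- Let u and w be C¹ maps from a neighbourhood of the triangle K in ℝ² to ℝ². Suppose that: (i) ∫_{eᵢ} γ ((w − u) · nᵢ) ds = 0 for every affine γ : ℝ² → ℝ and each edge eᵢ, i ∈ {1,2,3}, where nᵢ is the outward unit normal to K on eᵢ; and (ii) ∫_K ∇γ · (w − u) dx = 0 for every affine γ : ℝ² → ℝ. Then ∫_K α (∇·w − ∇·u) dx = 0 for every affine function α : ℝ² → ℝ. -/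
open MeasureTheory

noncomputable section

/-- Gradient `∇g = (∂g/∂x₁, ∂g/∂x₂)` of `g : ℝ² → ℝ`. -/
def grad2 (g : ℝ × ℝ → ℝ) (x : ℝ × ℝ) : ℝ × ℝ :=
  (fderiv ℝ g x (1, 0), fderiv ℝ g x (0, 1))

/-- Divergence `∇·w = ∂w₁/∂x₁ + ∂w₂/∂x₂` of `w : ℝ² → ℝ²`. -/
def div2 (w : ℝ × ℝ → ℝ × ℝ) (x : ℝ × ℝ) : ℝ :=
  (fderiv ℝ w x (1, 0)).1 + (fderiv ℝ w x (0, 1)).2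

/-- Line integral `∫_{[a,b]} h ds = ‖b − a‖ ∫₀¹ h((1−s)a + sb) ds`
(Euclidean length). -/
def lineIntegral (h : ℝ × ℝ → ℝ) (a b : ℝ × ℝ) : ℝ :=
  Real.sqrt ((b.1 - a.1) ^ 2 + (b.2 - a.2) ^ 2) *
    ∫ s in (0 : ℝ)..1, h ((1 - s) • a + s • b)

namespace BDFM
open MeasureTheory Set

def refT : Set (ℝ × ℝ) := {p : ℝ × ℝ | 0 ≤ p.1 ∧ 0 ≤ p.2 ∧ p.1 + p.2 ≤ 1}

lemma isClosed_refT : IsClosed refT := by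
  have h1 : IsClosed {p : ℝ × ℝ | 0 ≤ p.1} := isClosed_le continuous_const continuous_fst
  have h2 : IsClosed {p : ℝ × ℝ | 0 ≤ p.2} := isClosed_le continuous_const continuous_snd
  have h3 : IsClosed {p : ℝ × ℝ | p.1 + p.2 ≤ 1} :=
    isClosed_le (continuous_fst.add continuous_snd) continuous_const
  exact (h1.inter (h2.inter h3))

lemma measurableSet_refT : MeasurableSet refT := isClosed_refT.measurableSet

lemma isCompact_refT : IsCompact refT := by
  have : refT ⊆ (Icc (0:ℝ) 1) ×ˢ (Icc (0:ℝ) 1) := by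
    rintro ⟨x, y⟩ ⟨h1, h2, h3⟩
    simp only [mem_prod, mem_Icc]
    constructor <;> constructor <;> dsimp at * <;> linarith
  exact (isCompact_Icc.prod isCompact_Icc).of_isClosed_subset isClosed_refT this

lemma convexHull_refT :
    convexHull ℝ {((0:ℝ),(0:ℝ)), ((1:ℝ),(0:ℝ)), ((0:ℝ),(1:ℝ))} = refT := by
  apply le_antisymm
  · apply convexHull_min
    · rintro x hx
      rcases hx with h | h | h <;> subst h <;>
        simp [refT] <;> norm_num
    · rintro ⟨x1, x2⟩ ⟨a1, a2, a3⟩ ⟨y1, y2⟩ ⟨b1, b2, b3⟩ s t hs ht hst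
      refine ⟨?_, ?_, ?_⟩ <;> dsimp at * <;> nlinarith
  · rintro ⟨x, y⟩ ⟨h1, h2, h3⟩
    have hC := convex_convexHull ℝ ({((0:ℝ),(0:ℝ)), ((1:ℝ),(0:ℝ)), ((0:ℝ),(1:ℝ))} : Set (ℝ×ℝ))
    have m0 : ((0:ℝ),(0:ℝ)) ∈ convexHull ℝ {((0:ℝ),(0:ℝ)), ((1:ℝ),(0:ℝ)), ((0:ℝ),(1:ℝ))} :=
      subset_convexHull _ _ (by simp)
    have m1 : ((1:ℝ),(0:ℝ)) ∈ convexHull ℝ {((0:ℝ),(0:ℝ)), ((1:ℝ),(0:ℝ)), ((0:ℝ),(1:ℝ))} :=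
      subset_convexHull _ _ (by simp)
    have m2 : ((0:ℝ),(1:ℝ)) ∈ convexHull ℝ {((0:ℝ),(0:ℝ)), ((1:ℝ),(0:ℝ)), ((0:ℝ),(1:ℝ))} :=
      subset_convexHull _ _ (by simp)
    have key : ((x, y) : ℝ × ℝ) = ∑ i : Fin 3, ![1 - x - y, x, y] i • ![((0:ℝ),(0:ℝ)), (1,0), (0,1)] i := by
      simp [Fin.sum_univ_three, Prod.ext_iff]
    rw [key]
    refine hC.sum_mem (fun i _ => ?_) (by simp [Fin.sum_univ_three]; ring) (fun i _ => ?_)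
    · fin_cases i <;> simp [Matrix.vecHead, Matrix.vecTail] <;> linarith
    · fin_cases i
      · exact m0
      · exact m1
      · exact m2

set_option maxHeartbeats 2000000 in
lemma refT_div (G : ℝ×ℝ → ℝ×ℝ) (V : Set (ℝ×ℝ)) (hV : IsOpen V) (hTV : refT ⊆ V)
    (hG : ContDiffOn ℝ 1 G V) :
    ∫ z in refT, div2 G z
      = (∫ s in (0:ℝ)..1, ((G (1-s, s)).1 + (G (1-s, s)).2))
        - (∫ s in (0:ℝ)..1, (G (0, 1-s)).1)
        - (∫ s in (0:ℝ)..1, (G (s, 0)).2) := by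
  have hd : ∀ z ∈ V, HasFDerivAt G (fderiv ℝ G z) z := fun z hz =>
    ((hG.differentiableOn one_ne_zero).differentiableAt (hV.mem_nhds hz)).hasFDerivAt
  have hdc : ContinuousOn (fun z => fderiv ℝ G z) V :=
    hG.continuousOn_fderiv_of_isOpen hV le_rfl
  set h1 : ℝ×ℝ → ℝ := fun z => (fderiv ℝ G z (1,0)).1 with hh1
  set h2 : ℝ×ℝ → ℝ := fun z => (fderiv ℝ G z (0,1)).2 with hh2
  have h1c : ContinuousOn h1 V := by
    have : Continuous fun T : (ℝ×ℝ) →L[ℝ] (ℝ×ℝ) => (T (1,0)).1 :=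
      (continuous_fst.comp (ContinuousLinearMap.apply ℝ (ℝ×ℝ) ((1:ℝ),(0:ℝ))).continuous)
    exact this.comp_continuousOn hdc
  have h2c : ContinuousOn h2 V := by
    have : Continuous fun T : (ℝ×ℝ) →L[ℝ] (ℝ×ℝ) => (T (0,1)).2 :=
      (continuous_snd.comp (ContinuousLinearMap.apply ℝ (ℝ×ℝ) ((0:ℝ),(1:ℝ))).continuous)
    exact this.comp_continuousOn hdc
  have hGc : ContinuousOn G V := hG.continuousOn
  -- slice membership
  have hmem : ∀ x y : ℝ, ((x,y) ∈ refT ↔ x ∈ Icc (0:ℝ) 1 ∧ y ∈ Icc 0 (1-x)) := by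
    intro x y
    constructor
    · rintro ⟨a, b, c⟩; exact ⟨⟨a, by dsimp at *; linarith⟩, ⟨b, by dsimp at *; linarith⟩⟩
    · rintro ⟨⟨a,b⟩, ⟨c,d⟩⟩; exact ⟨a, c, by dsimp; linarith⟩
  -- Part A : vertical slices for h2
  have partA : ∫ z in refT, h2 z
      = ∫ x in (0:ℝ)..1, ((G (x, 1-x)).2 - (G (x, 0)).2) := by
    have hInt : IntegrableOn h2 refT := (h2c.mono hTV).integrableOn_compact isCompact_refT
    have hIndInt : Integrable (indicator refT h2) :=
      (integrable_indicator_iff measurableSet_refT).2 hInt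
    rw [← integral_indicator measurableSet_refT]
    rw [show (volume : Measure (ℝ×ℝ)) = (volume : Measure ℝ).prod volume from rfl]
    rw [integral_prod _ (by rw [← Measure.volume_eq_prod]; exact hIndInt)]
    have inner : ∀ x : ℝ, (∫ y, indicator refT h2 (x,y))
        = indicator (Icc (0:ℝ) 1) (fun x => (G (x, 1-x)).2 - (G (x, 0)).2) x := by
      intro x
      by_cases hx : x ∈ Icc (0:ℝ) 1
      · have hxle : (0:ℝ) ≤ 1 - x := by have := hx.2; linarith
        have hsl : ∀ y, indicator refT h2 (x,y)
            = indicator (Icc (0:ℝ) (1-x)) (fun y => h2 (x,y)) y := by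
          intro y
          by_cases hy : y ∈ Icc (0:ℝ) (1-x)
          · rw [indicator_of_mem ((hmem x y).2 ⟨hx, hy⟩), indicator_of_mem hy]
          · rw [indicator_of_notMem (fun h => hy ((hmem x y).1 h).2), indicator_of_notMem hy]
        rw [indicator_of_mem hx]
        simp_rw [hsl]
        rw [integral_indicator measurableSet_Icc, integral_Icc_eq_integral_Ioc,
          ← intervalIntegral.integral_of_le hxle]
        have hsub : ∀ y ∈ uIcc (0:ℝ) (1-x), (x, y) ∈ V := by
          intro y hy
          rw [uIcc_of_le hxle] at hy
          exact hTV ((hmem x y).2 ⟨hx, hy⟩)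
        have := intervalIntegral.integral_eq_sub_of_hasDerivAt
          (f := fun y => (G (x,y)).2) (f' := fun y => h2 (x,y)) (a := (0:ℝ)) (b := 1-x)
          (fun y hy => by
            have hcurve : HasDerivAt (fun y : ℝ => ((x,y) : ℝ×ℝ)) ((0:ℝ),(1:ℝ)) y :=
              (hasDerivAt_const y x).prodMk (hasDerivAt_id y)
            have hG' : HasDerivAt (fun y => G (x,y)) (fderiv ℝ G (x,y) (0,1)) y :=
              (hd _ (hsub y hy)).comp_hasDerivAt y hcurve
            exact hG'.snd)
          (by
            apply ContinuousOn.intervalIntegrable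
            exact h2c.comp (Continuous.continuousOn (by fun_prop)) hsub)
        rw [this]
      · rw [indicator_of_notMem hx]
        have : ∀ y : ℝ, indicator refT h2 (x,y) = 0 := by
          intro y
          exact indicator_of_notMem (fun h => hx ((hmem x y).1 h).1) _
        simp [this]
    simp_rw [inner]
    rw [integral_indicator measurableSet_Icc, integral_Icc_eq_integral_Ioc,
      ← intervalIntegral.integral_of_le (by norm_num : (0:ℝ) ≤ 1)]
  -- Part B : horizontal slices for h1
  have hmem' : ∀ x y : ℝ, ((x,y) ∈ refT ↔ y ∈ Icc (0:ℝ) 1 ∧ x ∈ Icc 0 (1-y)) := by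
    intro x y
    constructor
    · rintro ⟨a, b, c⟩; exact ⟨⟨b, by dsimp at *; linarith⟩, ⟨a, by dsimp at *; linarith⟩⟩
    · rintro ⟨⟨a,b⟩, ⟨c,d⟩⟩; exact ⟨c, a, by dsimp; linarith⟩
  have partB : ∫ z in refT, h1 z
      = ∫ y in (0:ℝ)..1, ((G (1-y, y)).1 - (G (0, y)).1) := by
    have hInt : IntegrableOn h1 refT := (h1c.mono hTV).integrableOn_compact isCompact_refT
    have hIndInt : Integrable (indicator refT h1) :=
      (integrable_indicator_iff measurableSet_refT).2 hInt
    rw [← integral_indicator measurableSet_refT]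
    rw [show (volume : Measure (ℝ×ℝ)) = (volume : Measure ℝ).prod volume from rfl]
    rw [integral_prod_symm _ (by rw [← Measure.volume_eq_prod]; exact hIndInt)]
    have inner : ∀ y : ℝ, (∫ x, indicator refT h1 (x,y))
        = indicator (Icc (0:ℝ) 1) (fun y => (G (1-y, y)).1 - (G (0, y)).1) y := by
      intro y
      by_cases hy : y ∈ Icc (0:ℝ) 1
      · have hyle : (0:ℝ) ≤ 1 - y := by have := hy.2; linarith
        have hsl : ∀ x, indicator refT h1 (x,y)
            = indicator (Icc (0:ℝ) (1-y)) (fun x => h1 (x,y)) x := by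
          intro x
          by_cases hx : x ∈ Icc (0:ℝ) (1-y)
          · rw [indicator_of_mem ((hmem' x y).2 ⟨hy, hx⟩), indicator_of_mem hx]
          · rw [indicator_of_notMem (fun h => hx ((hmem' x y).1 h).2), indicator_of_notMem hx]
        rw [indicator_of_mem hy]
        simp_rw [hsl]
        rw [integral_indicator measurableSet_Icc, integral_Icc_eq_integral_Ioc,
          ← intervalIntegral.integral_of_le hyle]
        have hsub : ∀ x ∈ uIcc (0:ℝ) (1-y), (x, y) ∈ V := by
          intro x hx
          rw [uIcc_of_le hyle] at hx
          exact hTV ((hmem' x y).2 ⟨hy, hx⟩)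
        have := intervalIntegral.integral_eq_sub_of_hasDerivAt
          (f := fun x => (G (x,y)).1) (f' := fun x => h1 (x,y)) (a := (0:ℝ)) (b := 1-y)
          (fun x hx => by
            have hcurve : HasDerivAt (fun x : ℝ => ((x,y) : ℝ×ℝ)) ((1:ℝ),(0:ℝ)) x :=
              (hasDerivAt_id x).prodMk (hasDerivAt_const x y)
            have hG' : HasDerivAt (fun x => G (x,y)) (fderiv ℝ G (x,y) (1,0)) x :=
              (hd _ (hsub x hx)).comp_hasDerivAt x hcurve
            exact hG'.fst)
          (by
            apply ContinuousOn.intervalIntegrable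
            exact h1c.comp (Continuous.continuousOn (by fun_prop)) hsub)
        rw [this]
      · rw [indicator_of_notMem hy]
        have : ∀ x : ℝ, indicator refT h1 (x,y) = 0 := by
          intro x
          exact indicator_of_notMem (fun h => hy ((hmem' x y).1 h).1) _
        simp [this]
    simp_rw [inner]
    rw [integral_indicator measurableSet_Icc, integral_Icc_eq_integral_Ioc,
      ← intervalIntegral.integral_of_le (by norm_num : (0:ℝ) ≤ 1)]
  -- split the divergence integral
  have hInt1 : IntegrableOn h1 refT := (h1c.mono hTV).integrableOn_compact isCompact_refT
  have hInt2 : IntegrableOn h2 refT := (h2c.mono hTV).integrableOn_compact isCompact_refT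
  have hsplit : ∫ z in refT, div2 G z = (∫ z in refT, h1 z) + ∫ z in refT, h2 z := by
    have : ∀ z, div2 G z = h1 z + h2 z := fun z => rfl
    simp_rw [this]
    exact integral_add hInt1 hInt2
  -- interval integrability of edge integrands
  have edgeii : ∀ (c : ℝ → ℝ×ℝ), Continuous c → (∀ s ∈ Icc (0:ℝ) 1, c s ∈ refT) →
      ∀ g : ℝ×ℝ → ℝ, ContinuousOn g V → IntervalIntegrable (fun s => g (c s)) volume 0 1 := by
    intro c hc hm g hg
    apply ContinuousOn.intervalIntegrable
    apply hg.comp hc.continuousOn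
    intro s hs; rw [uIcc_of_le (by norm_num : (0:ℝ) ≤ 1)] at hs; exact hTV (hm s hs)
  have gc1 : ContinuousOn (fun z : ℝ×ℝ => (G z).1) V := continuous_fst.comp_continuousOn hGc
  have gc2 : ContinuousOn (fun z : ℝ×ℝ => (G z).2) V := continuous_snd.comp_continuousOn hGc
  have memhyp : ∀ s ∈ Icc (0:ℝ) 1, ((1-s, s) : ℝ×ℝ) ∈ refT := by
    rintro s ⟨a,b⟩; exact ⟨by dsimp; linarith, a, by dsimp; linarith⟩
  have memleft : ∀ s ∈ Icc (0:ℝ) 1, ((0, s) : ℝ×ℝ) ∈ refT := by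
    rintro s ⟨a,b⟩; exact ⟨le_refl 0, a, by dsimp; linarith⟩
  have membot : ∀ s ∈ Icc (0:ℝ) 1, ((s, 0) : ℝ×ℝ) ∈ refT := by
    rintro s ⟨a,b⟩; exact ⟨a, le_refl 0, by dsimp; linarith⟩
  have memhyp' : ∀ s ∈ Icc (0:ℝ) 1, ((s, 1-s) : ℝ×ℝ) ∈ refT := by
    rintro s ⟨a,b⟩; exact ⟨a, by dsimp; linarith, by dsimp; linarith⟩
  have memleft' : ∀ s ∈ Icc (0:ℝ) 1, ((0, 1-s) : ℝ×ℝ) ∈ refT := by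
    rintro s ⟨a,b⟩; exact ⟨le_refl 0, by dsimp; linarith, by dsimp; linarith⟩
  have ii1 : IntervalIntegrable (fun s => (G (1-s, s)).1) volume 0 1 :=
    edgeii (fun s => (1-s, s)) (by fun_prop) memhyp (fun z => (G z).1) gc1
  have ii2 : IntervalIntegrable (fun s => (G (1-s, s)).2) volume 0 1 :=
    edgeii (fun s => (1-s, s)) (by fun_prop) memhyp (fun z => (G z).2) gc2
  have iiJ1 : IntervalIntegrable (fun s => (G (0, s)).1) volume 0 1 :=
    edgeii (fun s => (0, s)) (by fun_prop) memleft (fun z => (G z).1) gc1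
  have iiJ2 : IntervalIntegrable (fun s => (G (s, 0)).2) volume 0 1 :=
    edgeii (fun s => (s, 0)) (by fun_prop) membot (fun z => (G z).2) gc2
  have iiA : IntervalIntegrable (fun s => (G (s, 1-s)).2) volume 0 1 :=
    edgeii (fun s => (s, 1-s)) (by fun_prop) memhyp' (fun z => (G z).2) gc2
  -- flips
  have flip : ∀ f : ℝ → ℝ, (∫ s in (0:ℝ)..1, f (1-s)) = ∫ s in (0:ℝ)..1, f s := by
    intro f
    simpa using intervalIntegral.integral_comp_sub_left (a := (0:ℝ)) (b := 1) f 1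
  have flipA : (∫ s in (0:ℝ)..1, (G (s, 1-s)).2) = ∫ s in (0:ℝ)..1, (G (1-s, s)).2 := by
    have := flip (fun t => (G (1-t, t)).2)
    simpa using this
  have flipL : (∫ s in (0:ℝ)..1, (G (0, 1-s)).1) = ∫ s in (0:ℝ)..1, (G (0, s)).1 :=
    flip (fun t => (G (0, t)).1)
  have eA : (∫ x in (0:ℝ)..1, ((G (x, 1-x)).2 - (G (x, 0)).2))
      = (∫ s in (0:ℝ)..1, (G (1-s, s)).2) - ∫ s in (0:ℝ)..1, (G (s, 0)).2 := by
    rw [intervalIntegral.integral_sub iiA iiJ2, flipA]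
  have eB : (∫ y in (0:ℝ)..1, ((G (1-y, y)).1 - (G (0, y)).1))
      = (∫ s in (0:ℝ)..1, (G (1-s, s)).1) - ∫ s in (0:ℝ)..1, (G (0, s)).1 :=
    intervalIntegral.integral_sub ii1 iiJ1
  have eC : (∫ s in (0:ℝ)..1, ((G (1-s, s)).1 + (G (1-s, s)).2))
      = (∫ s in (0:ℝ)..1, (G (1-s, s)).1) + ∫ s in (0:ℝ)..1, (G (1-s, s)).2 :=
    intervalIntegral.integral_add ii1 ii2
  rw [hsplit, partA, partB, eA, eB, eC, flipL]
  ring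

/-- The linear map `z ↦ (a z₁ + b z₂, c z₁ + d z₂)`. -/
def lmap (a b c d : ℝ) : (ℝ×ℝ) →L[ℝ] (ℝ×ℝ) :=
  LinearMap.toContinuousLinearMap
  { toFun := fun z => (a*z.1 + b*z.2, c*z.1 + d*z.2)
    map_add' := by intro x y; simp [Prod.ext_iff]; constructor <;> ring
    map_smul' := by intro m x; simp [Prod.ext_iff]; constructor <;> ring }

@[simp] lemma lmap_apply (a b c d : ℝ) (z : ℝ×ℝ) :
    lmap a b c d z = (a*z.1 + b*z.2, c*z.1 + d*z.2) := rfl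

lemma lmap_det (a b c d : ℝ) : (lmap a b c d).det = a*d - b*c := by
  have : (lmap a b c d).det = LinearMap.det ((lmap a b c d) : (ℝ×ℝ) →ₗ[ℝ] (ℝ×ℝ)) := rfl
  rw [this, ← LinearMap.det_toMatrix (Module.Basis.finTwoProd ℝ)]
  rw [Matrix.det_fin_two]
  simp [LinearMap.toMatrix_apply]

lemma det_ne (v : Fin 3 → ℝ×ℝ) (hv : AffineIndependent ℝ v) :
    (v 1 - v 0).1 * (v 2 - v 0).2 - (v 2 - v 0).1 * (v 1 - v 0).2 ≠ 0 := by
  intro hδ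
  set x := v 1 - v 0 with hx
  set y := v 2 - v 0 with hy
  by_cases hx0 : x = 0
  · exact (by norm_num : (1:Fin 3) ≠ 0) (hv.injective (by
      have : v 1 = v 0 := by
        have := hx0; rw [hx] at this; exact sub_eq_zero.1 this
      exact this))
  · have hnorm : x.1^2 + x.2^2 ≠ 0 := by
      intro h
      apply hx0
      have h1 : x.1 = 0 := by nlinarith [sq_nonneg x.1, sq_nonneg x.2]
      have h2 : x.2 = 0 := by nlinarith [sq_nonneg x.1, sq_nonneg x.2]
      exact Prod.ext h1 h2
    set t := (x.1*y.1 + x.2*y.2)/(x.1^2 + x.2^2) with ht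
    have hyx : y = t • x := by
      have h1 : t * x.1 = y.1 := by
        rw [ht]; field_simp; linear_combination x.2 * hδ
      have h2 : t * x.2 = y.2 := by
        rw [ht]; field_simp; linear_combination (-x.1) * hδ
      exact Prod.ext (by simpa using h1.symm) (by simpa using h2.symm)
    have := affineIndependent_iff.1 hv Finset.univ ![t - 1, -t, 1]
      (by simp [Fin.sum_univ_three]; ring)
      (by
        rw [Fin.sum_univ_three]
        simp only [Matrix.cons_val_zero, Matrix.cons_val_one, Matrix.head_cons, Matrix.cons_val_two, Matrix.tail_cons]
        have : (t - 1) • v 0 + (-t) • v 1 + (1:ℝ) • v 2 = y - t • x := by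
          rw [hx, hy]; module
        rw [this, hyx]; simp)
      2 (Finset.mem_univ _)
    exact one_ne_zero this

/-- characterization of the outward unit normal -/
lemma normal_char (nv D z : ℝ×ℝ) (δ : ℝ) (hδ : δ ≠ 0)
    (hunit : nv.1^2 + nv.2^2 = 1) (hperp : nv.1*D.1 + nv.2*D.2 = 0)
    (hout : nv.1*z.1 + nv.2*z.2 < 0) (hdet : D.2*z.1 - D.1*z.2 = -δ) :
    Real.sqrt (D.1^2 + D.2^2) * nv.1 = (if 0 < δ then (1:ℝ) else -1) * D.2 ∧
    Real.sqrt (D.1^2 + D.2^2) * nv.2 = -((if 0 < δ then (1:ℝ) else -1) * D.1) := by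
  set sg : ℝ := if 0 < δ then (1:ℝ) else -1 with hsg
  set ℓsq : ℝ := D.1^2 + D.2^2 with hℓsq
  have hℓsq_pos : 0 < ℓsq := by
    rcases lt_or_eq_of_le (by positivity : (0:ℝ) ≤ ℓsq) with h | h
    · exact h
    · exfalso
      have h1 : D.1 = 0 := by nlinarith [sq_nonneg D.1, sq_nonneg D.2]
      have h2 : D.2 = 0 := by nlinarith [sq_nonneg D.1, sq_nonneg D.2]
      rw [h1, h2] at hdet; simp at hdet; exact hδ (by linarith)
  set ℓ : ℝ := Real.sqrt ℓsq with hℓ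
  have hℓpos : 0 < ℓ := Real.sqrt_pos.2 hℓsq_pos
  have hℓ2 : ℓ^2 = ℓsq := Real.sq_sqrt hℓsq_pos.le
  set t : ℝ := (nv.1*D.2 - nv.2*D.1)/ℓsq with ht
  have h1 : nv.1 = t * D.2 := by
    rw [ht]; field_simp; linear_combination D.1 * hperp
  have h2 : nv.2 = -(t * D.1) := by
    rw [ht]; field_simp; linear_combination D.2 * hperp
  have hunit' : t^2 * ℓsq = 1 := by
    rw [hℓsq]
    linear_combination hunit - (nv.1 + t*D.2)*h1 - (nv.2 - t*D.1)*h2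
  have htl : (t*ℓ)^2 = 1 := by
    have : (t*ℓ)^2 = t^2 * ℓ^2 := by ring
    rw [this, hℓ2, hunit']
  have houtt : 0 < t * δ := by
    have hval : nv.1*z.1 + nv.2*z.2 = -(t*δ) := by
      rw [h1, h2]; linear_combination t * hdet
    rw [hval] at hout; linarith
  have hfac : (ℓ*t - 1)*(ℓ*t + 1) = 0 := by linear_combination htl
  have key : ℓ * t = sg := by
    rcases lt_trichotomy δ 0 with hneg | hzero | hpos
    · have hsg' : sg = -1 := by rw [hsg, if_neg (by linarith)]
      have htneg : t < 0 := by
        by_contra h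
        push_neg at h
        nlinarith
      have hltneg : ℓ * t < 0 := mul_neg_of_pos_of_neg hℓpos htneg
      rcases mul_eq_zero.1 hfac with h | h
      · linarith
      · rw [hsg']; linarith
    · exact absurd hzero hδ
    · have hsg' : sg = 1 := by rw [hsg, if_pos hpos]
      have htpos : 0 < t := by
        by_contra h
        push_neg at h
        nlinarith
      have hltpos : 0 < ℓ * t := mul_pos hℓpos htpos
      rcases mul_eq_zero.1 hfac with h | h
      · rw [hsg']; linarith
      · linarith
  constructor
  · rw [h1]; linear_combination D.2 * key
  · rw [h2]; linear_combination (-D.1) * key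


/-- helper: a line integral of `F · n` as an integral against a constant vector -/
lemma edge_line (F : ℝ×ℝ→ℝ×ℝ) (nv P Q wvec : ℝ×ℝ)
    (h1 : Real.sqrt ((Q.1-P.1)^2 + (Q.2-P.2)^2) * nv.1 = wvec.1)
    (h2 : Real.sqrt ((Q.1-P.1)^2 + (Q.2-P.2)^2) * nv.2 = wvec.2) :
    lineIntegral (fun x => dot (F x) nv) P Q
      = ∫ s in (0:ℝ)..1, dot (F ((1-s) • P + s • Q)) wvec := by
  unfold lineIntegral
  rw [← intervalIntegral.integral_const_mul]
  apply intervalIntegral.integral_congr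
  intro s _
  dsimp [dot]
  linear_combination (F ((1-s) • P + s • Q)).1 * h1 + (F ((1-s) • P + s • Q)).2 * h2

set_option maxHeartbeats 1000000 in
lemma tri_div (v : Fin 3 → ℝ × ℝ) (hv : AffineIndependent ℝ v)
    (n : Fin 3 → ℝ × ℝ)
    (hn_unit : ∀ i : Fin 3, (n i).1 ^ 2 + (n i).2 ^ 2 = 1)
    (hn_normal : ∀ i : Fin 3, dot (n i) (v (i + 2) - v (i + 1)) = 0)
    (hn_outward : ∀ i : Fin 3, dot (n i) (v i - v (i + 1)) < 0)
    (U : Set (ℝ×ℝ)) (hU : IsOpen U) (hKU : convexHull ℝ {v 0, v 1, v 2} ⊆ U)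
    (F : ℝ×ℝ → ℝ×ℝ) (hF : ContDiffOn ℝ 1 F U) :
    ∫ x in convexHull ℝ {v 0, v 1, v 2}, div2 F x
      = ∑ i : Fin 3, lineIntegral (fun x => dot (F x) (n i)) (v (i+1)) (v (i+2)) := by
  set a := (v 1 - v 0).1 with ha
  set b := (v 2 - v 0).1 with hb
  set c := (v 1 - v 0).2 with hc
  set d := (v 2 - v 0).2 with hd
  set δ := a*d - b*c with hδdef
  have hδ : δ ≠ 0 := det_ne v hv
  set sg : ℝ := if 0 < δ then (1:ℝ) else -1 with hsgdef
  have hsgδ : sg * δ = |δ| := by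
    rcases lt_trichotomy δ 0 with hneg | hz | hpos
    · rw [hsgdef, if_neg (by linarith), abs_of_neg hneg]; ring
    · exact absurd hz hδ
    · rw [hsgdef, if_pos hpos, abs_of_pos hpos]; ring
  set L := lmap a b c d with hL
  set φ : ℝ×ℝ → ℝ×ℝ := fun z => v 0 + L z with hφ
  -- vertices
  have hφ00 : φ ((0:ℝ),(0:ℝ)) = v 0 := by
    simp [hφ, hL, Prod.ext_iff]
  have hφ10 : φ ((1:ℝ),(0:ℝ)) = v 1 := by
    simp only [hφ, hL, lmap_apply, mul_one, mul_zero, add_zero]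
    rw [ha, hc]
    simp [Prod.ext_iff, Prod.fst_sub, Prod.snd_sub]
  have hφ01 : φ ((0:ℝ),(1:ℝ)) = v 2 := by
    simp only [hφ, hL, lmap_apply, mul_one, mul_zero, zero_add]
    rw [hb, hd]
    simp [Prod.ext_iff, Prod.fst_sub, Prod.snd_sub]
  -- affine map
  set A : (ℝ×ℝ) →ᵃ[ℝ] (ℝ×ℝ) :=
    { toFun := φ
      linear := (L : (ℝ×ℝ) →ₗ[ℝ] (ℝ×ℝ))
      map_vadd' := by
        intro p q
        simp [hφ, map_add]
        abel } with hA
  have hAφ : ⇑A = φ := rfl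
  -- image of the reference triangle
  have himg : φ '' refT = convexHull ℝ {v 0, v 1, v 2} := by
    rw [← convexHull_refT, ← hAφ, AffineMap.image_convexHull]
    rw [Set.image_insert_eq, Set.image_insert_eq, Set.image_singleton]
    rw [hAφ, hφ00, hφ10, hφ01]
  -- injectivity
  have hinj : Set.InjOn φ refT := by
    intro z1 _ z2 _ h
    have hL' : L z1 = L z2 := by
      have := h
      simp only [hφ] at this
      exact add_left_cancel this
    rw [hL] at hL'
    simp only [lmap_apply, Prod.ext_iff] at hL'
    obtain ⟨e1, e2⟩ := hL'
    have hx : δ * (z1.1 - z2.1) = 0 := by rw [hδdef]; linear_combination d*e1 - b*e2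
    have hy : δ * (z1.2 - z2.2) = 0 := by rw [hδdef]; linear_combination a*e2 - c*e1
    have hx' : z1.1 = z2.1 := by
      rcases mul_eq_zero.1 hx with h' | h'
      · exact absurd h' hδ
      · linarith
    have hy' : z1.2 = z2.2 := by
      rcases mul_eq_zero.1 hy with h' | h'
      · exact absurd h' hδ
      · linarith
    exact Prod.ext hx' hy'
  -- change of variables
  have hcov : ∫ x in convexHull ℝ {v 0, v 1, v 2}, div2 F x
      = ∫ z in refT, |δ| • div2 F (φ z) := by
    rw [← himg]
    have := integral_image_eq_integral_abs_det_fderiv_smul volume measurableSet_refT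
      (f := φ) (f' := fun _ => L)
      (fun z _ => ((L.hasFDerivAt).const_add (v 0)).hasFDerivWithinAt) hinj (div2 F)
    rw [this]
    congr 1
    funext z
    rw [hL, lmap_det, ← hδdef]
  -- Piola transform
  set S := lmap (sg*d) (-(sg*b)) (-(sg*c)) (sg*a) with hS
  set G : ℝ×ℝ → ℝ×ℝ := fun z => S (F (φ z)) with hG
  set V : Set (ℝ×ℝ) := φ ⁻¹' U with hV
  have hφcont : Continuous φ := by
    rw [hφ]; exact continuous_const.add L.continuous
  have hVopen : IsOpen V := hU.preimage hφcont
  have hTV : refT ⊆ V := by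
    intro z hz
    have : φ z ∈ convexHull ℝ {v 0, v 1, v 2} := by
      rw [← himg]; exact Set.mem_image_of_mem φ hz
    exact hKU this
  have hφcd : ContDiff ℝ 1 φ := by
    rw [hφ]; exact contDiff_const.add L.contDiff
  have hGcd : ContDiffOn ℝ 1 G V := by
    have h1 : ContDiffOn ℝ 1 (F ∘ φ) V :=
      hF.comp hφcd.contDiffOn (fun z hz => hz)
    exact S.contDiff.comp_contDiffOn h1
  -- the divergence identity
  have hdiv : ∀ z ∈ refT, |δ| • div2 F (φ z) = div2 G z := by
    intro z hz
    have hUz : φ z ∈ U := hTV hz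
    set T := fderiv ℝ F (φ z) with hT
    have hTd : HasFDerivAt F T (φ z) :=
      ((hF.differentiableOn one_ne_zero).differentiableAt (hU.mem_nhds hUz)).hasFDerivAt
    have hφd : HasFDerivAt φ (L : (ℝ×ℝ) →L[ℝ] (ℝ×ℝ)) z := by
      rw [hφ]; exact (L.hasFDerivAt).const_add (v 0)
    have hGd : HasFDerivAt G (S.comp (T.comp L)) z := by
      have h1 : HasFDerivAt (F ∘ φ) (T.comp L) z := hTd.comp z hφd
      exact S.hasFDerivAt.comp z h1
    have hac : T ((a, c) : ℝ×ℝ) = a • T (1,0) + c • T (0,1) := by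
      rw [show ((a,c) : ℝ×ℝ) = a • ((1:ℝ),(0:ℝ)) + c • ((0:ℝ),(1:ℝ)) from by
        simp [Prod.ext_iff], map_add, T.map_smul, T.map_smul]
    have hbd : T ((b, d) : ℝ×ℝ) = b • T (1,0) + d • T (0,1) := by
      rw [show ((b,d) : ℝ×ℝ) = b • ((1:ℝ),(0:ℝ)) + d • ((0:ℝ),(1:ℝ)) from by
        simp [Prod.ext_iff], map_add, T.map_smul, T.map_smul]
    have hdG : div2 G z = (S (T (a, c))).1 + (S (T (b, d))).2 := by
      rw [div2, hGd.fderiv]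
      simp only [ContinuousLinearMap.comp_apply, hL, lmap_apply]
      norm_num
    have hdF : div2 F (φ z) = (T (1,0)).1 + (T (0,1)).2 := by
      rw [div2, ← hT]
    rw [hdG, hdF, hac, hbd]
    simp only [hS, lmap_apply, smul_eq_mul, Prod.fst_add, Prod.snd_add,
      Prod.smul_fst, Prod.smul_snd]
    rw [← hsgδ, hδdef]
    ring
  have hcongr : ∫ z in refT, |δ| • div2 F (φ z) = ∫ z in refT, div2 G z :=
    setIntegral_congr_fun measurableSet_refT (fun z hz => hdiv z hz)
  have hrefl := refT_div G V hVopen hTV hGcd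
  -- component subtraction facts
  have hs01 : (v 2 - v 1).1 = b - a := by rw [hb, ha]; simp only [Prod.fst_sub]; ring
  have hs02 : (v 2 - v 1).2 = d - c := by rw [hd, hc]; simp only [Prod.snd_sub]; ring
  have hs11 : (v 0 - v 2).1 = -b := by rw [hb]; simp only [Prod.fst_sub]; ring
  have hs12 : (v 0 - v 2).2 = -d := by rw [hd]; simp only [Prod.snd_sub]; ring
  have hs21 : (v 1 - v 0).1 = a := by rw [ha]
  have hs22 : (v 1 - v 0).2 = c := by rw [hc]
  -- edge 0
  obtain ⟨hch0a, hch0b⟩ := normal_char (n 0) (v 2 - v 1) (v 0 - v 1) δ hδ (hn_unit 0)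
    (by simpa [dot] using hn_normal 0)
    (by simpa [dot] using hn_outward 0)
    (by rw [hδdef, ha, hb, hc, hd]; simp only [Prod.fst_sub, Prod.snd_sub]; ring)
  rw [← hsgdef] at hch0a hch0b
  have hE0 : lineIntegral (fun x => dot (F x) (n 0)) (v 1) (v 2)
      = ∫ s in (0:ℝ)..1, ((G (1-s, s)).1 + (G (1-s, s)).2) := by
    rw [edge_line F (n 0) (v 1) (v 2) (sg * (v 2 - v 1).2, -(sg * (v 2 - v 1).1))
      (by simpa [Prod.fst_sub, Prod.snd_sub] using hch0a)
      (by simpa [Prod.fst_sub, Prod.snd_sub] using hch0b)]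
    apply intervalIntegral.integral_congr
    intro s _
    have hpt : φ ((1-s : ℝ), (s:ℝ)) = (1-s) • v 1 + s • v 2 := by
      simp only [hφ, hL, lmap_apply]
      rw [ha, hb, hc, hd]
      simp only [Prod.ext_iff, Prod.fst_sub, Prod.snd_sub, Prod.fst_add, Prod.snd_add,
        Prod.smul_fst, Prod.smul_snd, smul_eq_mul]
      constructor <;> ring
    simp only [hG, hpt, hS, lmap_apply, dot, hs01, hs02]
    ring
  -- edge 1
  obtain ⟨hch1a, hch1b⟩ := normal_char (n 1) (v 0 - v 2) (v 1 - v 2) δ hδ (hn_unit 1)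
    (by simpa [dot] using hn_normal 1)
    (by simpa [dot] using hn_outward 1)
    (by rw [hδdef, ha, hb, hc, hd]; simp only [Prod.fst_sub, Prod.snd_sub]; ring)
  rw [← hsgdef] at hch1a hch1b
  have hE1 : lineIntegral (fun x => dot (F x) (n 1)) (v 2) (v 0)
      = ∫ s in (0:ℝ)..1, (-(G (0, 1-s)).1) := by
    rw [edge_line F (n 1) (v 2) (v 0) (sg * (v 0 - v 2).2, -(sg * (v 0 - v 2).1))
      (by simpa [Prod.fst_sub, Prod.snd_sub] using hch1a)
      (by simpa [Prod.fst_sub, Prod.snd_sub] using hch1b)]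
    apply intervalIntegral.integral_congr
    intro s _
    have hpt : φ ((0 : ℝ), (1-s:ℝ)) = (1-s) • v 2 + s • v 0 := by
      simp only [hφ, hL, lmap_apply]
      rw [hb, hd]
      simp only [Prod.ext_iff, Prod.fst_sub, Prod.snd_sub, Prod.fst_add, Prod.snd_add,
        Prod.smul_fst, Prod.smul_snd, smul_eq_mul]
      constructor <;> ring
    simp only [hG, hpt, hS, lmap_apply, dot, hs11, hs12]
    ring
  -- edge 2
  obtain ⟨hch2a, hch2b⟩ := normal_char (n 2) (v 1 - v 0) (v 2 - v 0) δ hδ (hn_unit 2)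
    (by simpa [dot] using hn_normal 2)
    (by simpa [dot] using hn_outward 2)
    (by rw [hδdef, ha, hb, hc, hd]; simp only [Prod.fst_sub, Prod.snd_sub]; ring)
  rw [← hsgdef] at hch2a hch2b
  have hE2 : lineIntegral (fun x => dot (F x) (n 2)) (v 0) (v 1)
      = ∫ s in (0:ℝ)..1, (-(G (s, 0)).2) := by
    rw [edge_line F (n 2) (v 0) (v 1) (sg * (v 1 - v 0).2, -(sg * (v 1 - v 0).1))
      (by simpa [Prod.fst_sub, Prod.snd_sub] using hch2a)
      (by simpa [Prod.fst_sub, Prod.snd_sub] using hch2b)]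
    apply intervalIntegral.integral_congr
    intro s _
    have hpt : φ ((s : ℝ), (0:ℝ)) = (1-s) • v 0 + s • v 1 := by
      simp only [hφ, hL, lmap_apply]
      rw [ha, hc]
      simp only [Prod.ext_iff, Prod.fst_sub, Prod.snd_sub, Prod.fst_add, Prod.snd_add,
        Prod.smul_fst, Prod.smul_snd, smul_eq_mul]
      constructor <;> ring
    simp only [hG, hpt, hS, lmap_apply, dot, hs21, hs22]
    ring
  rw [hcov, hcongr, hrefl, Fin.sum_univ_three]
  simp only [Fin.isValue, Fin.reduceAdd]
  rw [hE0, hE1, hE2, intervalIntegral.integral_neg, intervalIntegral.integral_neg]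
  ring


lemma div2_contOn (F : ℝ×ℝ → ℝ×ℝ) (U : Set (ℝ×ℝ)) (hU : IsOpen U)
    (hF : ContDiffOn ℝ 1 F U) : ContinuousOn (div2 F) U := by
  have hdc : ContinuousOn (fun z => fderiv ℝ F z) U :=
    hF.continuousOn_fderiv_of_isOpen hU le_rfl
  have h1 : Continuous fun T : (ℝ×ℝ) →L[ℝ] (ℝ×ℝ) => (T (1,0)).1 :=
    continuous_fst.comp (ContinuousLinearMap.apply ℝ (ℝ×ℝ) ((1:ℝ),(0:ℝ))).continuous
  have h2 : Continuous fun T : (ℝ×ℝ) →L[ℝ] (ℝ×ℝ) => (T (0,1)).2 :=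
    continuous_snd.comp (ContinuousLinearMap.apply ℝ (ℝ×ℝ) ((0:ℝ),(1:ℝ))).continuous
  exact (h1.comp_continuousOn hdc).add (h2.comp_continuousOn hdc)


end BDFM

open BDFM MeasureTheory Set in

/-- **Commuting-diagram property of the BDFM1 projection.**
Let `u`, `w` be `C¹` on an open neighbourhood of the triangle
`K = conv{v 0, v 1, v 2}`, let `n i` be the outward unit normal on edge
`e i`. If the edge normal moments of `w − u` against affine functions
vanish and the interior moments of `w − u` against gradients of affine
functions vanish, then `∫_K α (∇·w − ∇·u) dx = 0` for every affine `α`. -/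
theorem commuting_divergence_moments
    (v : Fin 3 → ℝ × ℝ) (hv : AffineIndependent ℝ v)
    (K : Set (ℝ × ℝ)) (hK : K = convexHull ℝ {v 0, v 1, v 2})
    (n : Fin 3 → ℝ × ℝ)
    (hn_unit : ∀ i : Fin 3, (n i).1 ^ 2 + (n i).2 ^ 2 = 1)
    (hn_normal : ∀ i : Fin 3, dot (n i) (v (i + 2) - v (i + 1)) = 0)
    (hn_outward : ∀ i : Fin 3, dot (n i) (v i - v (i + 1)) < 0)
    (U : Set (ℝ × ℝ)) (hU : IsOpen U) (hKU : K ⊆ U)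
    (u w : (ℝ × ℝ) → ℝ × ℝ)
    (hu : ContDiffOn ℝ 1 u U) (hw : ContDiffOn ℝ 1 w U)
    (hedge : ∀ γ : (ℝ × ℝ) →ᵃ[ℝ] ℝ, ∀ i : Fin 3,
      lineIntegral (fun x => γ x * dot (w x - u x) (n i))
        (v (i + 1)) (v (i + 2)) = 0)
    (hint : ∀ γ : (ℝ × ℝ) →ᵃ[ℝ] ℝ,
      ∫ x in K, dot (grad2 (⇑γ) x) (w x - u x) = 0) :
    ∀ α : (ℝ × ℝ) →ᵃ[ℝ] ℝ,
      ∫ x in K, α x * (div2 w x - div2 u x) = 0 := by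
  intro α
  set f : ℝ×ℝ → ℝ×ℝ := fun x => w x - u x with hf
  set F : ℝ×ℝ → ℝ×ℝ := fun x => α x • f x with hFdef
  set Lα : (ℝ×ℝ) →L[ℝ] ℝ := LinearMap.toContinuousLinearMap α.linear with hLα
  have hαd : ∀ x, HasFDerivAt (⇑α) Lα x := by
    intro x
    have h1 : HasFDerivAt (fun y => Lα y + α 0) Lα x := Lα.hasFDerivAt.add_const (α 0)
    have h2 : ⇑α = fun y => Lα y + α 0 := by
      funext y
      have := α.decomp
      rw [this]
      simp [hLα]
    rw [h2]
    exact h1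
  have hαcd : ContDiff ℝ 1 ⇑α := by
    have h2 : ⇑α = fun y => Lα y + α 0 := by
      funext y; rw [α.decomp]; simp [hLα]
    rw [h2]
    exact (Lα.contDiff).add contDiff_const
  have hgrad : ∀ x, grad2 (⇑α) x = (Lα (1,0), Lα (0,1)) := by
    intro x
    rw [grad2, (hαd x).fderiv]
  -- K facts
  have hKcomp : IsCompact K := by
    rw [hK]
    exact (Set.Finite.isCompact_convexHull ℝ (by
      apply Set.Finite.insert; apply Set.Finite.insert; exact Set.finite_singleton _))
  have hKmeas : MeasurableSet K := hKcomp.isClosed.measurableSet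
  have hfcd : ContDiffOn ℝ 1 f U := hw.sub hu
  have hFcd : ContDiffOn ℝ 1 F U := (hαcd.contDiffOn).smul hfcd
  -- pointwise identity on U
  have hpt : ∀ x ∈ U, α x * (div2 w x - div2 u x)
      = div2 F x - dot (grad2 (⇑α) x) (f x) := by
    intro x hx
    have hud : HasFDerivAt u (fderiv ℝ u x) x :=
      ((hu.differentiableOn one_ne_zero).differentiableAt (hU.mem_nhds hx)).hasFDerivAt
    have hwd : HasFDerivAt w (fderiv ℝ w x) x :=
      ((hw.differentiableOn one_ne_zero).differentiableAt (hU.mem_nhds hx)).hasFDerivAt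
    have hfd : HasFDerivAt f (fderiv ℝ w x - fderiv ℝ u x) x := hwd.sub hud
    have hFd : HasFDerivAt F ((α x) • (fderiv ℝ w x - fderiv ℝ u x)
        + Lα.smulRight (f x)) x := (hαd x).smul hfd
    rw [div2, div2, div2, hFd.fderiv, hgrad x]
    simp only [ContinuousLinearMap.add_apply, ContinuousLinearMap.smul_apply,
      ContinuousLinearMap.sub_apply, ContinuousLinearMap.smulRight_apply,
      Prod.fst_add, Prod.snd_add, Prod.fst_sub, Prod.snd_sub,
      Prod.smul_fst, Prod.smul_snd, smul_eq_mul, dot]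
    ring
  -- split the integral
  have hsplit : ∫ x in K, α x * (div2 w x - div2 u x)
      = (∫ x in K, div2 F x) - ∫ x in K, dot (grad2 (⇑α) x) (f x) := by
    rw [← integral_sub]
    · exact setIntegral_congr_fun hKmeas (fun x hx => hpt x (hKU hx))
    · exact ((div2_contOn F U hU hFcd).mono hKU).integrableOn_compact hKcomp
    · have hcont : ContinuousOn (fun x => dot (grad2 (⇑α) x) (f x)) U := by
        have : (fun x => dot (grad2 (⇑α) x) (f x))
            = fun x => (Lα (1,0)) * (f x).1 + (Lα (0,1)) * (f x).2 := by
          funext x; rw [hgrad x]; rfl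
        rw [this]
        have hfc : ContinuousOn f U := hfcd.continuousOn
        exact (continuousOn_const.mul (continuous_fst.comp_continuousOn hfc)).add
          (continuousOn_const.mul (continuous_snd.comp_continuousOn hfc))
      exact (hcont.mono hKU).integrableOn_compact hKcomp
  rw [hsplit, hint α]
  have hdiv : ∫ x in K, div2 F x
      = ∑ i : Fin 3, lineIntegral (fun x => dot (F x) (n i)) (v (i+1)) (v (i+2)) := by
    rw [hK]
    exact tri_div v hv n hn_unit hn_normal hn_outward U hU (hK ▸ hKU) F hFcd
  rw [hdiv]
  have hterm : ∀ i : Fin 3,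
      lineIntegral (fun x => dot (F x) (n i)) (v (i+1)) (v (i+2)) = 0 := by
    intro i
    have : (fun x => dot (F x) (n i)) = fun x => α x * dot (w x - u x) (n i) := by
      funext x
      simp only [hFdef, hf, dot, Prod.smul_fst, Prod.smul_snd, smul_eq_mul]
      ring
    rw [this]
    exact hedge α i
  simp only [hterm, Finset.sum_const_zero]
  ring
end
end

section
/- Let a, b ∈ ℝ² with a ≠ b, let n be a unit vector normal to the segment [a,b], and let χ : ℝ² → ℝ be C¹ on a neighbourhood of [a,b] with χ(a) = χ(b) = 0 and ∫_{[a,b]} χ ds = 0. Then for every affine function γ : ℝ² → ℝ, ∫_{[a,b]} γ (∇⊥χ · n) ds = 0. -/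
open MeasureTheory

noncomputable section

/-- **Edge identity for the commuting BDFM1 projection.**
Let `a ≠ b` in `ℝ²`, `n` a unit normal to the segment `[a, b]`, and `χ` a
`C¹` function on an open neighbourhood of `[a, b]` with `χ(a) = χ(b) = 0`
and `∫_{[a,b]} χ ds = 0`. Then for every affine `γ : ℝ² → ℝ`,
`∫_{[a,b]} γ (∇⊥χ · n) ds = 0`. -/
theorem edge_moment_vanishes
    (a b : ℝ × ℝ) (hab : a ≠ b)
    (n : ℝ × ℝ) (hn_unit : n.1 ^ 2 + n.2 ^ 2 = 1)
    (hn_normal : dot n (b - a) = 0)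
    (U : Set (ℝ × ℝ)) (hU : IsOpen U) (hseg : segment ℝ a b ⊆ U)
    (χ : ℝ × ℝ → ℝ) (hχ : ContDiffOn ℝ 1 χ U)
    (ha : χ a = 0) (hb : χ b = 0)
    (hmean : lineIntegral χ a b = 0) :
    ∀ γ : (ℝ × ℝ) →ᵃ[ℝ] ℝ,
      lineIntegral (fun x => γ x * dot (perpGrad χ x) n) a b = 0 := by
  intro γ
  set c : ℝ × ℝ := b - a with hc
  have hc0 : c ≠ 0 := sub_ne_zero.2 (Ne.symm hab)
  -- parametrization
  set x : ℝ → ℝ × ℝ := fun s => a + s • c with hxdef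
  have hrepr : ∀ s : ℝ, (1 - s) • a + s • b = x s := by
    intro s
    simp only [hxdef, hc]
    module
  have hmem : ∀ s ∈ Set.Icc (0 : ℝ) 1, x s ∈ U := by
    intro s hs
    apply hseg
    rw [segment_eq_image']
    exact ⟨s, hs, rfl⟩
  have hx0 : x 0 = a := by simp [hxdef]
  have hx1 : x 1 = b := by simp [hxdef, hc]
  have hdiff : ∀ s ∈ Set.Icc (0 : ℝ) 1, DifferentiableAt ℝ χ (x s) := fun s hs =>
    (hχ.differentiableOn one_ne_zero).differentiableAt (hU.mem_nhds (hmem s hs))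
  -- derivative of the parametrization
  have hxd : ∀ s : ℝ, HasDerivAt x c s := by
    intro s
    simpa [hxdef] using ((hasDerivAt_id s).smul_const c).const_add a
  set f : ℝ → ℝ := fun s => χ (x s) with hfdef
  set F' : ℝ → ℝ := fun s => fderiv ℝ χ (x s) c with hF'def
  have hf : ∀ s ∈ Set.Icc (0 : ℝ) 1, HasDerivAt f (F' s) s := fun s hs =>
    ((hdiff s hs).hasFDerivAt).comp_hasDerivAt s (hxd s)
  have hxc : Continuous x := by
    apply continuous_const.add
    exact (continuous_id.smul continuous_const)
  have hF'c : ContinuousOn F' (Set.Icc (0 : ℝ) 1) := by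
    have h1 : ContinuousOn (fun s => fderiv ℝ χ (x s)) (Set.Icc (0 : ℝ) 1) :=
      (hχ.continuousOn_fderiv_of_isOpen hU le_rfl).comp hxc.continuousOn hmem
    exact h1.clm_apply continuousOn_const
  have hfc : ContinuousOn f (Set.Icc (0 : ℝ) 1) := fun s hs =>
    ((hf s hs).continuousAt).continuousWithinAt
  -- norm factor nonzero
  have hsq : (0 : ℝ) < (b.1 - a.1) ^ 2 + (b.2 - a.2) ^ 2 := by
    have h : b.1 - a.1 ≠ 0 ∨ b.2 - a.2 ≠ 0 := by
      by_contra h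
      push_neg at h
      exact hab (Prod.ext (by linarith [h.1]) (by linarith [h.2]))
    rcases h with h | h <;> positivity
  have hsqrt : Real.sqrt ((b.1 - a.1) ^ 2 + (b.2 - a.2) ^ 2) ≠ 0 :=
    ne_of_gt (Real.sqrt_pos.2 hsq)
  -- mean zero
  have hint0 : (∫ s in (0 : ℝ)..1, f s) = 0 := by
    unfold lineIntegral at hmean
    simp only [hrepr] at hmean
    exact (mul_eq_zero.1 hmean).resolve_left hsqrt
  -- decompose the normal
  have hortho : n.1 * c.1 + n.2 * c.2 = 0 := by
    simpa [dot, hc] using hn_normal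
  obtain ⟨t, ht1, ht2⟩ : ∃ t : ℝ, n.1 = -(t * c.2) ∧ n.2 = t * c.1 := by
    rcases eq_or_ne c.1 0 with h1 | h1
    · have h2 : c.2 ≠ 0 := by
        intro h2
        exact hc0 (Prod.ext h1 h2)
      refine ⟨-n.1 / c.2, by field_simp, ?_⟩
      rw [h1, mul_zero]
      have : n.2 * c.2 = 0 := by rw [h1] at hortho; linarith
      exact (mul_eq_zero.1 this).resolve_right h2
    · refine ⟨n.2 / c.1, ?_, by field_simp⟩
      field_simp
      linarith
  -- express the dot product via F'
  have hdot : ∀ s : ℝ, dot (perpGrad χ (x s)) n = t * F' s := by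
    intro s
    have hcd : (fderiv ℝ χ (x s)) c
        = c.1 * (fderiv ℝ χ (x s)) (1, 0) + c.2 * (fderiv ℝ χ (x s)) (0, 1) := by
      have key : (fderiv ℝ χ (x s)) (c.1 • ((1 : ℝ), (0 : ℝ)) + c.2 • ((0 : ℝ), (1 : ℝ)))
          = c.1 * (fderiv ℝ χ (x s)) (1, 0) + c.2 * (fderiv ℝ χ (x s)) (0, 1) := by
        rw [(fderiv ℝ χ (x s)).map_add, (fderiv ℝ χ (x s)).map_smul,
          (fderiv ℝ χ (x s)).map_smul, smul_eq_mul, smul_eq_mul]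
      have hceq : c.1 • ((1 : ℝ), (0 : ℝ)) + c.2 • ((0 : ℝ), (1 : ℝ)) = c := by
        ext <;> simp
      rw [hceq] at key
      exact key
    simp only [dot, perpGrad, hF'def, hcd, ht1, ht2]
    ring
  -- the affine function along the segment
  set L : ℝ := γ.linear c with hL
  have hγ : ∀ s : ℝ, γ (x s) = γ a + s * L := by
    intro s
    have h1 : x s = s • c +ᵥ a := by simp [hxdef, add_comm]
    rw [h1, γ.map_vadd, _root_.map_smul]
    simp [hL, add_comm, smul_eq_mul]
  -- set up integration by parts
  set u : ℝ → ℝ := fun s => t * γ a + (t * L) * s with hu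
  have hud : ∀ s ∈ Set.uIcc (0 : ℝ) 1, HasDerivAt u (t * L) s := by
    intro s _
    simpa [hu] using ((hasDerivAt_id s).const_mul (t * L)).const_add (t * γ a)
  have huIcc : Set.uIcc (0 : ℝ) 1 = Set.Icc (0 : ℝ) 1 := Set.uIcc_of_le zero_le_one
  have hfI : IntervalIntegrable (fun _ : ℝ => t * L) volume 0 1 := intervalIntegrable_const
  have hF'I : IntervalIntegrable F' volume 0 1 := by
    rw [← huIcc] at hF'c
    exact hF'c.intervalIntegrable
  have hparts : (∫ s in (0 : ℝ)..1, u s * F' s)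
      = u 1 * f 1 - u 0 * f 0 - ∫ s in (0 : ℝ)..1, (t * L) * f s := by
    apply intervalIntegral.integral_mul_deriv_eq_deriv_mul hud
      (fun s hs => hf s (huIcc ▸ hs)) hfI hF'I
  have hconst : (∫ s in (0 : ℝ)..1, (t * L) * f s) = (t * L) * ∫ s in (0 : ℝ)..1, f s :=
    intervalIntegral.integral_const_mul _ _
  have hf0 : f 0 = 0 := by simp [hfdef, hx0, ha]
  have hf1 : f 1 = 0 := by simp [hfdef, hx1, hb]
  -- conclude
  unfold lineIntegral
  simp only [hrepr]
  have hkey : (fun s : ℝ => γ (x s) * dot (perpGrad χ (x s)) n) = fun s => u s * F' s := by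
    funext s
    rw [hγ s, hdot s, hu]
    ring
  rw [show (∫ s in (0 : ℝ)..1, γ (x s) * dot (perpGrad χ (x s)) n)
      = ∫ s in (0 : ℝ)..1, u s * F' s from by rw [hkey]]
  rw [hparts, hconst, hint0, hf0, hf1]
  ring
end
end

section
/- Let χ : ℝ² → ℝ be C¹ on a neighbourhood of the triangle K with χ(vᵢ) = 0 for i = 1,2,3 and ∫_{eᵢ} χ ds = 0 for each edge eᵢ. Then for every affine function γ : ℝ² → ℝ, ∫_K ∇γ(x) · ∇⊥χ(x) dx = 0. -/
open MeasureTheory Set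

noncomputable section

def stdTri : Set (ℝ × ℝ) := {p | 0 ≤ p.1 ∧ 0 ≤ p.2 ∧ p.1 + p.2 ≤ 1}

lemma isClosed_stdTri : IsClosed stdTri := by
  have h1 : IsClosed {p : ℝ × ℝ | 0 ≤ p.1} := isClosed_le continuous_const continuous_fst
  have h2 : IsClosed {p : ℝ × ℝ | 0 ≤ p.2} := isClosed_le continuous_const continuous_snd
  have h3 : IsClosed {p : ℝ × ℝ | p.1 + p.2 ≤ 1} :=
    isClosed_le (continuous_fst.add continuous_snd) continuous_const
  exact (h1.inter (h2.inter h3))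

lemma measurableSet_stdTri : MeasurableSet stdTri := isClosed_stdTri.measurableSet

lemma isCompact_stdTri : IsCompact stdTri := by
  apply IsCompact.of_isClosed_subset (isCompact_Icc (a := ((0:ℝ),(0:ℝ))) (b := (1,1)))
    isClosed_stdTri
  rintro ⟨x, y⟩ ⟨hx, hy, hxy⟩
  constructor <;> constructor <;> simp_all <;> linarith

lemma fubini_snd (V : Set (ℝ × ℝ)) (hV : IsOpen V) (hΔV : stdTri ⊆ V)
    (f : ℝ × ℝ → ℝ) (hf : ContDiffOn ℝ 1 f V) :
    ∫ p in stdTri, fderiv ℝ f p (0, 1) =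
      (∫ x in (0:ℝ)..1, f (x, 1 - x)) - ∫ x in (0:ℝ)..1, f (x, 0) := by
  set g : ℝ × ℝ → ℝ := fun p => fderiv ℝ f p (0, 1) with hg
  have hgc : ContinuousOn g V :=
    (hf.continuousOn_fderiv_of_isOpen hV le_rfl).clm_apply continuousOn_const
  have hInt : IntegrableOn g stdTri := (hgc.mono hΔV).integrableOn_compact isCompact_stdTri
  have hind : Integrable (stdTri.indicator g) := (integrable_indicator_iff measurableSet_stdTri).2 hInt
  rw [← integral_indicator measurableSet_stdTri]
  rw [Measure.volume_eq_prod] at hind ⊢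
  rw [MeasureTheory.integral_prod _ hind]
  have key : (fun x => ∫ y, stdTri.indicator g (x, y)) =
      (Set.Icc (0:ℝ) 1).indicator (fun x => f (x, 1 - x) - f (x, 0)) := by
    funext x
    by_cases hx : x ∈ Set.Icc (0:ℝ) 1
    · rw [Set.indicator_of_mem hx]
      have h1x : (0:ℝ) ≤ 1 - x := by linarith [hx.2]
      have hin : (fun y => stdTri.indicator g (x, y)) =
          (Set.Icc (0:ℝ) (1 - x)).indicator (fun y => g (x, y)) := by
        funext y
        by_cases hy : y ∈ Set.Icc (0:ℝ) (1 - x)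
        · rw [Set.indicator_of_mem hy,
            Set.indicator_of_mem (show ((x,y) : ℝ × ℝ) ∈ stdTri from
              ⟨hx.1, hy.1, show x + y ≤ 1 by linarith [hy.2]⟩)]
        · rw [Set.indicator_of_notMem hy, Set.indicator_of_notMem]
          intro hmem
          have h2 : x + y ≤ 1 := hmem.2.2
          exact hy ⟨hmem.2.1, by linarith⟩
      rw [hin, integral_indicator measurableSet_Icc, integral_Icc_eq_integral_Ioc,
        ← intervalIntegral.integral_of_le h1x]
      apply intervalIntegral.integral_eq_sub_of_hasDerivAt (f := fun y => f (x, y))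
        (f' := fun y => g (x, y))
      · intro y hy
        rw [Set.uIcc_of_le h1x] at hy
        have hmem : ((x, y) : ℝ × ℝ) ∈ stdTri := ⟨hx.1, hy.1, show x + y ≤ 1 by linarith [hy.2]⟩
        have hdiff : DifferentiableAt ℝ f (x, y) :=
          (hf.contDiffAt (hV.mem_nhds (hΔV hmem))).differentiableAt one_ne_zero
        have hcurve : HasDerivAt (fun y : ℝ => ((x, y) : ℝ × ℝ)) ((0:ℝ), (1:ℝ)) y :=
          HasDerivAt.prodMk (hasDerivAt_const y x) (hasDerivAt_id y)
        exact hdiff.hasFDerivAt.comp_hasDerivAt y hcurve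
      · apply ContinuousOn.intervalIntegrable
        apply hgc.comp ((continuous_const.prodMk continuous_id).continuousOn)
        intro y hy
        rw [Set.uIcc_of_le h1x] at hy
        exact hΔV ⟨hx.1, hy.1, show x + y ≤ 1 by linarith [hy.2]⟩
    · rw [Set.indicator_of_notMem hx]
      have : (fun y => stdTri.indicator g (x, y)) = fun _ => (0:ℝ) := by
        funext y
        apply Set.indicator_of_notMem
        intro hmem
        simp only [Set.mem_Icc, not_and_or, not_le] at hx
        rcases hx with h | h
        · exact absurd hmem.1 (not_le.2 h)
        · have h2 : x + y ≤ 1 := hmem.2.2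
          have h1 : (0:ℝ) ≤ y := hmem.2.1
          linarith
      rw [this, integral_zero]
  rw [key, integral_indicator measurableSet_Icc, integral_Icc_eq_integral_Ioc,
    ← intervalIntegral.integral_of_le zero_le_one]
  have hc1 : ContinuousOn (fun x : ℝ => f (x, 1 - x)) (Set.uIcc (0:ℝ) 1) := by
    apply hf.continuousOn.comp
      ((continuous_id.prodMk (continuous_const.sub continuous_id)).continuousOn)
    intro x hx
    rw [Set.uIcc_of_le zero_le_one, Set.mem_Icc] at hx
    exact hΔV ⟨hx.1, show (0:ℝ) ≤ 1 - x by linarith [hx.2], show x + (1 - x) ≤ 1 by linarith⟩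
  have hc2 : ContinuousOn (fun x : ℝ => f (x, 0)) (Set.uIcc (0:ℝ) 1) := by
    apply hf.continuousOn.comp ((continuous_id.prodMk continuous_const).continuousOn)
    intro x hx
    rw [Set.uIcc_of_le zero_le_one, Set.mem_Icc] at hx
    exact hΔV ⟨hx.1, le_refl 0, show x + 0 ≤ 1 by linarith [hx.2]⟩
  rw [intervalIntegral.integral_sub hc1.intervalIntegrable hc2.intervalIntegrable]

lemma fubini_fst (V : Set (ℝ × ℝ)) (hV : IsOpen V) (hΔV : stdTri ⊆ V)
    (f : ℝ × ℝ → ℝ) (hf : ContDiffOn ℝ 1 f V) :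
    ∫ p in stdTri, fderiv ℝ f p (1, 0) =
      (∫ y in (0:ℝ)..1, f (1 - y, y)) - ∫ y in (0:ℝ)..1, f (0, y) := by
  set g : ℝ × ℝ → ℝ := fun p => fderiv ℝ f p (1, 0) with hg
  have hgc : ContinuousOn g V :=
    (hf.continuousOn_fderiv_of_isOpen hV le_rfl).clm_apply continuousOn_const
  have hInt : IntegrableOn g stdTri := (hgc.mono hΔV).integrableOn_compact isCompact_stdTri
  have hind : Integrable (stdTri.indicator g) := (integrable_indicator_iff measurableSet_stdTri).2 hInt
  rw [← integral_indicator measurableSet_stdTri]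
  rw [Measure.volume_eq_prod] at hind ⊢
  rw [MeasureTheory.integral_prod_symm _ hind]
  have key : (fun y => ∫ x, stdTri.indicator g (x, y)) =
      (Set.Icc (0:ℝ) 1).indicator (fun y => f (1 - y, y) - f (0, y)) := by
    funext y
    by_cases hy : y ∈ Set.Icc (0:ℝ) 1
    · rw [Set.indicator_of_mem hy]
      have h1y : (0:ℝ) ≤ 1 - y := by linarith [hy.2]
      have hin : (fun x => stdTri.indicator g (x, y)) =
          (Set.Icc (0:ℝ) (1 - y)).indicator (fun x => g (x, y)) := by
        funext x
        by_cases hx : x ∈ Set.Icc (0:ℝ) (1 - y)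
        · rw [Set.indicator_of_mem hx,
            Set.indicator_of_mem (show ((x,y) : ℝ × ℝ) ∈ stdTri from
              ⟨hx.1, hy.1, show x + y ≤ 1 by linarith [hx.2]⟩)]
        · rw [Set.indicator_of_notMem hx, Set.indicator_of_notMem]
          intro hmem
          have h2 : x + y ≤ 1 := hmem.2.2
          exact hx ⟨hmem.1, by linarith⟩
      rw [hin, integral_indicator measurableSet_Icc, integral_Icc_eq_integral_Ioc,
        ← intervalIntegral.integral_of_le h1y]
      apply intervalIntegral.integral_eq_sub_of_hasDerivAt (f := fun x => f (x, y))
        (f' := fun x => g (x, y))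
      · intro x hx
        rw [Set.uIcc_of_le h1y] at hx
        have hmem : ((x, y) : ℝ × ℝ) ∈ stdTri := ⟨hx.1, hy.1, show x + y ≤ 1 by linarith [hx.2]⟩
        have hdiff : DifferentiableAt ℝ f (x, y) :=
          (hf.contDiffAt (hV.mem_nhds (hΔV hmem))).differentiableAt one_ne_zero
        have hcurve : HasDerivAt (fun x : ℝ => ((x, y) : ℝ × ℝ)) ((1:ℝ), (0:ℝ)) x :=
          HasDerivAt.prodMk (hasDerivAt_id x) (hasDerivAt_const x y)
        exact hdiff.hasFDerivAt.comp_hasDerivAt x hcurve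
      · apply ContinuousOn.intervalIntegrable
        apply hgc.comp ((continuous_id.prodMk continuous_const).continuousOn)
        intro x hx
        rw [Set.uIcc_of_le h1y] at hx
        exact hΔV ⟨hx.1, hy.1, show x + y ≤ 1 by linarith [hx.2]⟩
    · rw [Set.indicator_of_notMem hy]
      have : (fun x => stdTri.indicator g (x, y)) = fun _ => (0:ℝ) := by
        funext x
        apply Set.indicator_of_notMem
        intro hmem
        simp only [Set.mem_Icc, not_and_or, not_le] at hy
        rcases hy with h | h
        · exact absurd hmem.2.1 (not_le.2 h)
        · have h2 : x + y ≤ 1 := hmem.2.2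
          have h1 : (0:ℝ) ≤ x := hmem.1
          linarith
      rw [this, integral_zero]
  rw [key, integral_indicator measurableSet_Icc, integral_Icc_eq_integral_Ioc,
    ← intervalIntegral.integral_of_le zero_le_one]
  have hc1 : ContinuousOn (fun y : ℝ => f (1 - y, y)) (Set.uIcc (0:ℝ) 1) := by
    apply hf.continuousOn.comp
      (((continuous_const.sub continuous_id).prodMk continuous_id).continuousOn)
    intro y hy
    rw [Set.uIcc_of_le zero_le_one, Set.mem_Icc] at hy
    exact hΔV ⟨show (0:ℝ) ≤ 1 - y by linarith [hy.2], hy.1, show (1 - y) + y ≤ 1 by linarith⟩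
  have hc2 : ContinuousOn (fun y : ℝ => f (0, y)) (Set.uIcc (0:ℝ) 1) := by
    apply hf.continuousOn.comp ((continuous_const.prodMk continuous_id).continuousOn)
    intro y hy
    rw [Set.uIcc_of_le zero_le_one, Set.mem_Icc] at hy
    exact hΔV ⟨le_refl 0, hy.1, show 0 + y ≤ 1 by linarith [hy.2]⟩
  rw [intervalIntegral.integral_sub hc1.intervalIntegrable hc2.intervalIntegrable]

lemma lineIntegral_param_zero (h : ℝ × ℝ → ℝ) (a b : ℝ × ℝ) (hab : a ≠ b)
    (h0 : lineIntegral h a b = 0) :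
    ∫ s in (0:ℝ)..1, h ((1 - s) • a + s • b) = 0 := by
  have hpos : 0 < Real.sqrt ((b.1 - a.1) ^ 2 + (b.2 - a.2) ^ 2) := by
    apply Real.sqrt_pos.2
    have hne : b.1 - a.1 ≠ 0 ∨ b.2 - a.2 ≠ 0 := by
      by_contra hcc
      push_neg at hcc
      apply hab
      have h1 : a.1 = b.1 := by linarith [hcc.1, sub_eq_zero.1 hcc.1]
      have h2 : a.2 = b.2 := by linarith [hcc.2, sub_eq_zero.1 hcc.2]
      exact Prod.ext_iff.2 ⟨h1, h2⟩
    rcases hne with hne | hne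
    · have : 0 < (b.1 - a.1) ^ 2 := by positivity
      nlinarith [sq_nonneg (b.2 - a.2)]
    · have : 0 < (b.2 - a.2) ^ 2 := by positivity
      nlinarith [sq_nonneg (b.1 - a.1)]
  exact (mul_eq_zero.1 h0).resolve_left (ne_of_gt hpos)

/-- **Interior identity for the commuting BDFM1 projection.**
Let `χ` be `C¹` on an open neighbourhood of the triangle
`K = conv{v 0, v 1, v 2}` with `χ(v i) = 0` for each vertex and
`∫_{e i} χ ds = 0` on each edge. Then for every affine `γ : ℝ² → ℝ`,
`∫_K ∇γ · ∇⊥χ dx = 0`. -/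
theorem interior_moment_vanishes
    (v : Fin 3 → ℝ × ℝ) (hv : AffineIndependent ℝ v)
    (K : Set (ℝ × ℝ)) (hK : K = convexHull ℝ {v 0, v 1, v 2})
    (U : Set (ℝ × ℝ)) (hU : IsOpen U) (hKU : K ⊆ U)
    (χ : ℝ × ℝ → ℝ) (hχ : ContDiffOn ℝ 1 χ U)
    (hvert : ∀ i : Fin 3, χ (v i) = 0)
    (hedge : ∀ i : Fin 3, lineIntegral χ (v (i + 1)) (v (i + 2)) = 0) :
    ∀ γ : (ℝ × ℝ) →ᵃ[ℝ] ℝ,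
      ∫ x in K, dot (grad2 (⇑γ) x) (perpGrad χ x) = 0 := by
  intro γ
  set E₁ : ℝ × ℝ := v 1 - v 0 with hE₁
  set E₂ : ℝ × ℝ := v 2 - v 0 with hE₂
  set L : (ℝ × ℝ) →L[ℝ] (ℝ × ℝ) :=
    (ContinuousLinearMap.fst ℝ ℝ ℝ).smulRight E₁ + (ContinuousLinearMap.snd ℝ ℝ ℝ).smulRight E₂
    with hL
  have hLapp : ∀ p : ℝ × ℝ, L p = p.1 • E₁ + p.2 • E₂ := by intro p; simp [hL]
  set T : ℝ × ℝ → ℝ × ℝ := fun p => v 0 + L p with hT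
  -- linear independence of E₁, E₂
  have hli : ∀ a b : ℝ, a • E₁ + b • E₂ = 0 → a = 0 ∧ b = 0 := by
    have h := (affineIndependent_iff_linearIndependent_vsub ℝ v 0).1 hv
    intro a b hab
    have h2 := h.comp (![⟨1, by decide⟩, ⟨2, by decide⟩] : Fin 2 → {x : Fin 3 // x ≠ 0})
      (by decide)
    have key := Fintype.linearIndependent_iff.1 h2 ![a, b] ?_
    · exact ⟨key 0, key 1⟩
    · simp [Fin.sum_univ_two]
      convert hab using 2 <;> simp [hE₁, hE₂]
  -- injectivity of L
  have hLinj : Function.Injective (⇑L) := by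
    intro p q hpq
    have h0 : L (p - q) = 0 := by rw [map_sub, hpq, sub_self]
    rw [hLapp] at h0
    have hz := hli (p - q).1 (p - q).2 h0
    have h1 : p.1 = q.1 := by have := hz.1; simp [Prod.fst_sub] at this; linarith
    have h2 : p.2 = q.2 := by have := hz.2; simp [Prod.snd_sub] at this; linarith
    exact Prod.ext_iff.2 ⟨h1, h2⟩
  have hTinj : Set.InjOn T stdTri := by
    intro p _ q _ hpq
    exact hLinj (by simpa [hT] using hpq)
  have hTda : ∀ x, HasFDerivAt T L x := fun x => L.hasFDerivAt.const_add (v 0)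
  have hTv0 : T (0, 0) = v 0 := by rw [hT]; simp only [hLapp]; simp
  have hTv1 : T (1, 0) = v 1 := by rw [hT]; simp only [hLapp]; simp [hE₁]
  have hTv2 : T (0, 1) = v 2 := by rw [hT]; simp only [hLapp]; simp [hE₂]
  have hconvTri : Convex ℝ stdTri := by
    intro p hp q hq a b ha hb hab
    refine ⟨?_, ?_, ?_⟩
    · have h' : (a • p + b • q).1 = a * p.1 + b * q.1 := rfl
      rw [h']; have := hp.1; have := hq.1; positivity
    · have h' : (a • p + b • q).2 = a * p.2 + b * q.2 := rfl
      rw [h']; have := hp.2.1; have := hq.2.1; positivity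
    · have h1 : (a • p + b • q).1 = a * p.1 + b * q.1 := rfl
      have h2 : (a • p + b • q).2 = a * p.2 + b * q.2 := rfl
      rw [h1, h2]
      nlinarith [hp.1, hq.1, hp.2.1, hq.2.1, hp.2.2, hq.2.2]
  have hKT : K = T '' stdTri := by
    rw [hK]
    apply Subset.antisymm
    · apply convexHull_min
      · rintro x hx
        simp only [Set.mem_insert_iff, Set.mem_singleton_iff] at hx
        rcases hx with rfl | rfl | rfl
        · exact ⟨(0, 0), by constructor <;> norm_num, hTv0⟩
        · exact ⟨(1, 0), by constructor <;> norm_num, hTv1⟩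
        · exact ⟨(0, 1), by constructor <;> norm_num, hTv2⟩
      · have himg : T '' stdTri = (fun x => v 0 + x) '' (⇑(L : (ℝ × ℝ) →ₗ[ℝ] (ℝ × ℝ)) '' stdTri) := by
          rw [Set.image_image]
          rfl
        rw [himg]
        exact (hconvTri.linear_image _).translate (v 0)
    · rintro _ ⟨p, hp, rfl⟩
      have hmem := (convex_convexHull ℝ ({v 0, v 1, v 2} : Set (ℝ × ℝ))).sum_mem
        (t := Finset.univ) (w := ![1 - p.1 - p.2, p.1, p.2]) (z := v)
        (by intro i _; fin_cases i <;> simp <;> linarith [hp.1, hp.2.1, hp.2.2])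
        (by simp [Fin.sum_univ_three]; ring)
        (by intro i _; fin_cases i <;> exact subset_convexHull ℝ _ (by simp))
      have hsum : ∑ i : Fin 3, ![1 - p.1 - p.2, p.1, p.2] i • v i = T p := by
        rw [Fin.sum_univ_three]
        simp only [Matrix.cons_val_zero, Matrix.cons_val_one, Matrix.head_cons,
          Matrix.cons_val_two, Matrix.tail_cons]
        rw [hT]; simp only [hLapp, hE₁, hE₂]; module
      rw [← hsum]; exact hmem
  -- neighbourhood and pullback
  set f : ℝ × ℝ → ℝ := χ ∘ T with hf
  have hTcont : Continuous T := continuous_const.add L.continuous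
  set V : Set (ℝ × ℝ) := T ⁻¹' U with hV
  have hVopen : IsOpen V := hU.preimage hTcont
  have hΔV : stdTri ⊆ V := by
    intro x hx
    exact hKU (by rw [hKT]; exact ⟨x, hx, rfl⟩)
  have hTsmooth : ContDiff ℝ 1 T := contDiff_const.add L.contDiff
  have hfC : ContDiffOn ℝ 1 f V := hχ.comp hTsmooth.contDiffOn (fun x hx => hx)
  have hchain : ∀ x ∈ V, ∀ u : ℝ × ℝ, fderiv ℝ f x u = fderiv ℝ χ (T x) (L u) := by
    intro x hx u
    have hχd : DifferentiableAt ℝ χ (T x) :=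
      (hχ.contDiffAt (hU.mem_nhds hx)).differentiableAt one_ne_zero
    have hcomp := (hχd.hasFDerivAt.comp x (hTda x)).fderiv
    rw [hf, hcomp]; rfl
  -- gradient of γ is constant
  set c1 : ℝ := γ.linear (1, 0) with hc1
  set c2 : ℝ := γ.linear (0, 1) with hc2
  have hcoe : ⇑γ = fun y => γ.linear y + γ 0 := by
    funext y
    conv_lhs => rw [AffineMap.decomp γ]
    rfl
  have hγd : ∀ x : ℝ × ℝ, HasFDerivAt (⇑γ) (LinearMap.toContinuousLinearMap γ.linear) x := by
    intro x
    rw [hcoe]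
    exact ((LinearMap.toContinuousLinearMap γ.linear).hasFDerivAt).add_const (γ 0)
  have hgrad : ∀ x : ℝ × ℝ, grad2 (⇑γ) x = (c1, c2) := by
    intro x
    unfold grad2
    rw [(hγd x).fderiv]
    simp [hc1, hc2]
  set w : ℝ × ℝ := (c2, -c1) with hwdef
  have hww : ∀ x : ℝ × ℝ, dot (grad2 (⇑γ) x) (perpGrad χ x) = fderiv ℝ χ x w := by
    intro x
    rw [hgrad x]
    show c1 * (-(fderiv ℝ χ x (0, 1))) + c2 * (fderiv ℝ χ x (1, 0)) = _
    have hsum : w = c2 • ((1:ℝ), (0:ℝ)) + (-c1) • ((0:ℝ), (1:ℝ)) := by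
      rw [hwdef]; apply Prod.ext_iff.2; constructor <;> simp
    rw [hsum]
    simp only [map_add, ContinuousLinearMap.map_smul, smul_eq_mul]
    ring
  -- decompose w in basis E₁, E₂
  have hsurj : Function.Surjective (⇑L) :=
    LinearMap.surjective_of_injective (f := (L : (ℝ × ℝ) →ₗ[ℝ] (ℝ × ℝ))) hLinj
  obtain ⟨q, hq⟩ := hsurj w
  -- change of variables
  rw [hKT, integral_image_eq_integral_abs_det_fderiv_smul volume measurableSet_stdTri
    (fun x _ => (hTda x).hasFDerivWithinAt) hTinj]
  have hcore : ∫ x in stdTri, dot (grad2 (⇑γ) (T x)) (perpGrad χ (T x)) = 0 := by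
    have heq : Set.EqOn (fun x => dot (grad2 (⇑γ) (T x)) (perpGrad χ (T x)))
        (fun x => q.1 • fderiv ℝ f x (1, 0) + q.2 • fderiv ℝ f x (0, 1)) stdTri := by
      intro x hx
      have e1 : fderiv ℝ f x (1, 0) = fderiv ℝ χ (T x) E₁ := by
        rw [hchain x (hΔV hx)]; congr 1; rw [hLapp]; simp
      have e2 : fderiv ℝ f x (0, 1) = fderiv ℝ χ (T x) E₂ := by
        rw [hchain x (hΔV hx)]; congr 1; rw [hLapp]; simp
      show dot (grad2 (⇑γ) (T x)) (perpGrad χ (T x)) = _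
      rw [hww (T x), ← hq, hLapp]
      simp only [map_add, ContinuousLinearMap.map_smul]
      rw [e1, e2]
    rw [setIntegral_congr_fun measurableSet_stdTri heq]
    have hi1 : IntegrableOn (fun x => fderiv ℝ f x (1, 0)) stdTri :=
      (((hfC.continuousOn_fderiv_of_isOpen hVopen le_rfl).clm_apply
        continuousOn_const).mono hΔV).integrableOn_compact isCompact_stdTri
    have hi2 : IntegrableOn (fun x => fderiv ℝ f x (0, 1)) stdTri :=
      (((hfC.continuousOn_fderiv_of_isOpen hVopen le_rfl).clm_apply
        continuousOn_const).mono hΔV).integrableOn_compact isCompact_stdTri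
    have hi1' : Integrable (fun x => q.1 • fderiv ℝ f x (1, 0)) (volume.restrict stdTri) :=
      hi1.smul q.1
    have hi2' : Integrable (fun x => q.2 • fderiv ℝ f x (0, 1)) (volume.restrict stdTri) :=
      hi2.smul q.2
    rw [integral_add hi1' hi2', integral_smul, integral_smul]
    rw [fubini_fst V hVopen hΔV f hfC, fubini_snd V hVopen hΔV f hfC]
    -- edge integrals in parametrized form
    have hvne : ∀ i j : Fin 3, i ≠ j → v i ≠ v j := fun i j hij h => hij (hv.injective h)
    have hA : ∫ s in (0:ℝ)..1, χ ((1 - s) • v 1 + s • v 2) = 0 :=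
      lineIntegral_param_zero χ (v 1) (v 2) (hvne 1 2 (by decide)) (hedge 0)
    have hB : ∫ s in (0:ℝ)..1, χ ((1 - s) • v 2 + s • v 0) = 0 :=
      lineIntegral_param_zero χ (v 2) (v 0) (hvne 2 0 (by decide)) (hedge 1)
    have hC : ∫ s in (0:ℝ)..1, χ ((1 - s) • v 0 + s • v 1) = 0 :=
      lineIntegral_param_zero χ (v 0) (v 1) (hvne 0 1 (by decide)) (hedge 2)
    have h1 : ∫ y in (0:ℝ)..1, f (1 - y, y) = 0 := by
      rw [intervalIntegral.integral_congr (g := fun y => χ ((1 - y) • v 1 + y • v 2))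
        (fun y _ => by
          show f (1 - y, y) = χ ((1 - y) • v 1 + y • v 2)
          rw [hf]; show χ (T (1 - y, y)) = _
          congr 1
          rw [hT]; simp only [hLapp, hE₁, hE₂]; module)]
      exact hA
    have h2 : ∫ y in (0:ℝ)..1, f (0, y) = 0 := by
      rw [intervalIntegral.integral_congr
          (g := fun y => (fun s => χ ((1 - s) • v 2 + s • v 0)) (1 - y))
        (fun y _ => by
          show f (0, y) = χ ((1 - (1 - y)) • v 2 + (1 - y) • v 0)
          rw [hf]; show χ (T (0, y)) = _
          congr 1
          rw [hT]; simp only [hLapp, hE₁, hE₂]; module)]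
      rw [intervalIntegral.integral_comp_sub_left (fun s => χ ((1 - s) • v 2 + s • v 0)) 1]
      norm_num
      exact hB
    have h3 : ∫ x in (0:ℝ)..1, f (x, 1 - x) = 0 := by
      rw [intervalIntegral.integral_congr
          (g := fun x => (fun s => χ ((1 - s) • v 1 + s • v 2)) (1 - x))
        (fun x _ => by
          show f (x, 1 - x) = χ ((1 - (1 - x)) • v 1 + (1 - x) • v 2)
          rw [hf]; show χ (T (x, 1 - x)) = _
          congr 1
          rw [hT]; simp only [hLapp, hE₁, hE₂]; module)]
      rw [intervalIntegral.integral_comp_sub_left (fun s => χ ((1 - s) • v 1 + s • v 2)) 1]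
      norm_num
      exact hA
    have h4 : ∫ x in (0:ℝ)..1, f (x, 0) = 0 := by
      rw [intervalIntegral.integral_congr (g := fun x => χ ((1 - x) • v 0 + x • v 1))
        (fun x _ => by
          show f (x, 0) = χ ((1 - x) • v 0 + x • v 1)
          rw [hf]; show χ (T (x, 0)) = _
          congr 1
          rw [hT]; simp only [hLapp, hE₁, hE₂]; module)]
      exact hC
    rw [h1, h2, h3, h4]
    simp
  calc ∫ x in stdTri, |L.det| • dot (grad2 (⇑γ) (T x)) (perpGrad χ (T x))
      = |L.det| • ∫ x in stdTri, dot (grad2 (⇑γ) (T x)) (perpGrad χ (T x)) :=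
        integral_smul _ _
    _ = 0 := by rw [hcore, smul_zero]
end
end

section
/- Let U ⊆ ℝ² be open, let g : U → ℝ² be a C² diffeomorphism onto its open image with Jacobian determinant det Dg(ξ) ≠ 0 for all ξ ∈ U, and let û : U → ℝ² be C¹. Define u : g(U) → ℝ² by the Piola transformation u(g(ξ)) = (1 / det Dg(ξ)) Dg(ξ) û(ξ). Then u is differentiable and its divergence satisfies (∇·u)(g(ξ)) = (1 / det Dg(ξ)) (∇̂·û)(ξ) for every ξ ∈ U, where ∇̂· denotes the divergence with respect to the coordinates ξ. -/
noncomputable section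

/-- Jacobian determinant of a map `g : ℝ² → ℝ²`. -/
def jdet (g : ℝ × ℝ → ℝ × ℝ) (x : ℝ × ℝ) : ℝ :=
  (fderiv ℝ g x (1, 0)).1 * (fderiv ℝ g x (0, 1)).2 -
    (fderiv ℝ g x (1, 0)).2 * (fderiv ℝ g x (0, 1)).1

lemma clm_decomp {F : Type*} [NormedAddCommGroup F] [NormedSpace ℝ F]
    (L : (ℝ × ℝ) →L[ℝ] F) (v : ℝ × ℝ) :
    L v = v.1 • L ((1:ℝ),(0:ℝ)) + v.2 • L ((0:ℝ),(1:ℝ)) := by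
  have hv : v = v.1 • (((1:ℝ),(0:ℝ)) : ℝ × ℝ) + v.2 • (((0:ℝ),(1:ℝ)) : ℝ × ℝ) := by
    simp [Prod.ext_iff]
  conv_lhs => rw [hv]
  rw [map_add, map_smul, map_smul]

lemma exists_inv_equiv (A : (ℝ × ℝ) →L[ℝ] (ℝ × ℝ))
    (hJ : (A (1,0)).1 * (A (0,1)).2 - (A (1,0)).2 * (A (0,1)).1 ≠ 0) :
    ∃ E : (ℝ × ℝ) ≃L[ℝ] (ℝ × ℝ), (E : (ℝ × ℝ) →L[ℝ] (ℝ × ℝ)) = A ∧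
      ∀ y : ℝ × ℝ, (E.symm : (ℝ × ℝ) →L[ℝ] (ℝ × ℝ)) y =
        ((A (1,0)).1 * (A (0,1)).2 - (A (1,0)).2 * (A (0,1)).1)⁻¹ •
          (((A (0,1)).2 * y.1 - (A (0,1)).1 * y.2,
            (A (1,0)).1 * y.2 - (A (1,0)).2 * y.1) : ℝ × ℝ) := by
  set a := (A (1,0)).1 with hadef; set c := (A (1,0)).2 with hcdef
  set b := (A (0,1)).1 with hbdef; set d := (A (0,1)).2 with hddef
  set J := a * d - c * b with hJdef
  have hJ0 : J ≠ 0 := fun h => hJ (by rw [hJdef] at h; linarith)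
  set B : (ℝ × ℝ) →L[ℝ] (ℝ × ℝ) :=
    J⁻¹ • ((d • ContinuousLinearMap.fst ℝ ℝ ℝ - b • ContinuousLinearMap.snd ℝ ℝ ℝ).prod
      (a • ContinuousLinearMap.snd ℝ ℝ ℝ - c • ContinuousLinearMap.fst ℝ ℝ ℝ)) with hB
  have hBA : Function.LeftInverse B A := by
    intro v
    have h1 := clm_decomp A v
    ext <;> simp [hB, h1, ← hadef, ← hbdef, ← hcdef, ← hddef] <;> field_simp <;> ring
  have hAB : Function.RightInverse B A := by
    intro v
    have h1 := clm_decomp A (B v)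
    rw [h1]
    ext <;> simp [hB, ← hadef, ← hbdef, ← hcdef, ← hddef] <;> field_simp <;> ring
  refine ⟨ContinuousLinearEquiv.equivOfInverse A B hBA hAB, rfl, fun y => ?_⟩
  rw [show ((ContinuousLinearEquiv.equivOfInverse A B hBA hAB).symm :
      (ℝ × ℝ) →L[ℝ] (ℝ × ℝ)) y = B y from by
    rw [ContinuousLinearEquiv.symm_equivOfInverse]; rfl]
  simp [hB, ← hadef, ← hbdef, ← hcdef, ← hddef, mul_comm]

set_option maxHeartbeats 2000000 in
/-- **The Piola transformation scales the divergence by the inverse Jacobian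
determinant.** Let `g` be a `C²` diffeomorphism of an open set `U ⊆ ℝ²` onto
its open image, with `det Dg ≠ 0` on `U`, let `û` be `C¹` on `U`, and define
`u` on `g(U)` by the Piola transformation
`u(g ξ) = (1 / det Dg ξ) • Dg ξ (û ξ)`. Then `u` is differentiable on `g(U)`
and `(∇·u)(g ξ) = (1 / det Dg ξ) (∇̂·û)(ξ)` for every `ξ ∈ U`. -/
theorem piola_divergence
    (U : Set (ℝ × ℝ)) (hU : IsOpen U)
    (g : ℝ × ℝ → ℝ × ℝ) (hg : ContDiffOn ℝ 2 g U)
    (hg_inj : Set.InjOn g U)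
    (hjd : ∀ ξ ∈ U, jdet g ξ ≠ 0)
    (uh : ℝ × ℝ → ℝ × ℝ) (huh : ContDiffOn ℝ 1 uh U)
    (u : ℝ × ℝ → ℝ × ℝ)
    (hu : ∀ ξ ∈ U, u (g ξ) = (1 / jdet g ξ) • fderiv ℝ g ξ (uh ξ)) :
    ∀ ξ ∈ U, DifferentiableAt ℝ u (g ξ) ∧
      div2 u (g ξ) = (1 / jdet g ξ) * div2 uh ξ := by
  intro ξ₀ hξ₀
  -- second derivative of g
  have hg' : ContDiffOn ℝ (1+1) g U := by norm_num; exact hg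
  have hDg : ContDiffOn ℝ 1 (fderiv ℝ g) U :=
    ((contDiffOn_succ_iff_fderiv_of_isOpen hU).1 hg').2.2
  have hDgd : DifferentiableAt ℝ (fderiv ℝ g) ξ₀ :=
    (hDg.differentiableOn one_ne_zero).differentiableAt (hU.mem_nhds hξ₀)
  have hD : HasFDerivAt (fderiv ℝ g) (fderiv ℝ (fderiv ℝ g) ξ₀) ξ₀ := hDgd.hasFDerivAt
  have hgat : ContDiffAt ℝ 2 g ξ₀ := hg.contDiffAt (hU.mem_nhds hξ₀)
  have hsymm : ∀ v w, fderiv ℝ (fderiv ℝ g) ξ₀ v w = fderiv ℝ (fderiv ℝ g) ξ₀ w v :=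
    hgat.isSymmSndFDerivAt (by norm_num)
  have hstrict : HasStrictFDerivAt g (fderiv ℝ g ξ₀) ξ₀ := hgat.hasStrictFDerivAt (by norm_num)
  have hJ0 : jdet g ξ₀ ≠ 0 := hjd ξ₀ hξ₀
  -- derivatives of the entries of Dg
  have ha : HasFDerivAt (fun ξ => (fderiv ℝ g ξ ((1:ℝ),(0:ℝ))).1)
      (((ContinuousLinearMap.fst ℝ ℝ ℝ).comp
          (ContinuousLinearMap.apply ℝ (ℝ×ℝ) ((1:ℝ),(0:ℝ)))).comp (fderiv ℝ (fderiv ℝ g) ξ₀)) ξ₀ :=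
    ((ContinuousLinearMap.fst ℝ ℝ ℝ).comp
        (ContinuousLinearMap.apply ℝ (ℝ×ℝ) ((1:ℝ),(0:ℝ)))).hasFDerivAt.comp ξ₀ hD
  have hc : HasFDerivAt (fun ξ => (fderiv ℝ g ξ ((1:ℝ),(0:ℝ))).2)
      (((ContinuousLinearMap.snd ℝ ℝ ℝ).comp
          (ContinuousLinearMap.apply ℝ (ℝ×ℝ) ((1:ℝ),(0:ℝ)))).comp (fderiv ℝ (fderiv ℝ g) ξ₀)) ξ₀ :=
    ((ContinuousLinearMap.snd ℝ ℝ ℝ).comp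
        (ContinuousLinearMap.apply ℝ (ℝ×ℝ) ((1:ℝ),(0:ℝ)))).hasFDerivAt.comp ξ₀ hD
  have hb : HasFDerivAt (fun ξ => (fderiv ℝ g ξ ((0:ℝ),(1:ℝ))).1)
      (((ContinuousLinearMap.fst ℝ ℝ ℝ).comp
          (ContinuousLinearMap.apply ℝ (ℝ×ℝ) ((0:ℝ),(1:ℝ)))).comp (fderiv ℝ (fderiv ℝ g) ξ₀)) ξ₀ :=
    ((ContinuousLinearMap.fst ℝ ℝ ℝ).comp
        (ContinuousLinearMap.apply ℝ (ℝ×ℝ) ((0:ℝ),(1:ℝ)))).hasFDerivAt.comp ξ₀ hD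
  have hd : HasFDerivAt (fun ξ => (fderiv ℝ g ξ ((0:ℝ),(1:ℝ))).2)
      (((ContinuousLinearMap.snd ℝ ℝ ℝ).comp
          (ContinuousLinearMap.apply ℝ (ℝ×ℝ) ((0:ℝ),(1:ℝ)))).comp (fderiv ℝ (fderiv ℝ g) ξ₀)) ξ₀ :=
    ((ContinuousLinearMap.snd ℝ ℝ ℝ).comp
        (ContinuousLinearMap.apply ℝ (ℝ×ℝ) ((0:ℝ),(1:ℝ)))).hasFDerivAt.comp ξ₀ hD
  -- derivatives of the components of uh
  have hduh : DifferentiableAt ℝ uh ξ₀ :=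
    (huh.differentiableOn one_ne_zero).differentiableAt (hU.mem_nhds hξ₀)
  have hDu : HasFDerivAt uh (fderiv ℝ uh ξ₀) ξ₀ := hduh.hasFDerivAt
  have hu1 : HasFDerivAt (fun ξ => (uh ξ).1)
      ((ContinuousLinearMap.fst ℝ ℝ ℝ).comp (fderiv ℝ uh ξ₀)) ξ₀ :=
    (ContinuousLinearMap.fst ℝ ℝ ℝ).hasFDerivAt.comp ξ₀ hDu
  have hu2 : HasFDerivAt (fun ξ => (uh ξ).2)
      ((ContinuousLinearMap.snd ℝ ℝ ℝ).comp (fderiv ℝ uh ξ₀)) ξ₀ :=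
    (ContinuousLinearMap.snd ℝ ℝ ℝ).hasFDerivAt.comp ξ₀ hDu
  -- P, Q, J
  have hJf : HasFDerivAt (fun x => jdet g x) _ ξ₀ := (ha.mul hd).sub (hc.mul hb)
  have hJinv : HasFDerivAt (fun ξ => (jdet g ξ)⁻¹) _ ξ₀ :=
    (hasFDerivAt_inv hJ0).comp ξ₀ hJf
  have hP : HasFDerivAt (fun ξ =>
      (fderiv ℝ g ξ ((1:ℝ),(0:ℝ))).1 * (uh ξ).1 + (fderiv ℝ g ξ ((0:ℝ),(1:ℝ))).1 * (uh ξ).2)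
      _ ξ₀ := (ha.mul hu1).add (hb.mul hu2)
  have hQ : HasFDerivAt (fun ξ =>
      (fderiv ℝ g ξ ((1:ℝ),(0:ℝ))).2 * (uh ξ).1 + (fderiv ℝ g ξ ((0:ℝ),(1:ℝ))).2 * (uh ξ).2)
      _ ξ₀ := (hc.mul hu1).add (hd.mul hu2)
  have hF : HasFDerivAt (fun ξ =>
      ((((fderiv ℝ g ξ ((1:ℝ),(0:ℝ))).1 * (uh ξ).1 + (fderiv ℝ g ξ ((0:ℝ),(1:ℝ))).1 * (uh ξ).2) * (jdet g ξ)⁻¹,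
        ((fderiv ℝ g ξ ((1:ℝ),(0:ℝ))).2 * (uh ξ).1 + (fderiv ℝ g ξ ((0:ℝ),(1:ℝ))).2 * (uh ξ).2) * (jdet g ξ)⁻¹) : ℝ × ℝ))
      _ ξ₀ := HasFDerivAt.prodMk (hP.mul hJinv) (hQ.mul hJinv)
  -- the function F of the Piola transform equals the pair-of-quotients function
  have hFeq : (fun ξ => (1 / jdet g ξ) • fderiv ℝ g ξ (uh ξ)) = (fun ξ =>
      ((((fderiv ℝ g ξ ((1:ℝ),(0:ℝ))).1 * (uh ξ).1 + (fderiv ℝ g ξ ((0:ℝ),(1:ℝ))).1 * (uh ξ).2) * (jdet g ξ)⁻¹,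
        ((fderiv ℝ g ξ ((1:ℝ),(0:ℝ))).2 * (uh ξ).1 + (fderiv ℝ g ξ ((0:ℝ),(1:ℝ))).2 * (uh ξ).2) * (jdet g ξ)⁻¹) : ℝ × ℝ)) := by
    funext ξ
    rw [clm_decomp (fderiv ℝ g ξ) (uh ξ)]
    have : ∀ x y : ℝ × ℝ, ∀ r s : ℝ, (r • x + s • y : ℝ × ℝ) = (r * x.1 + s * y.1, r * x.2 + s * y.2) := by
      intro x y r s; simp [Prod.ext_iff]
    rw [this]
    simp [Prod.ext_iff, smul_eq_mul]
    constructor <;> ring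
  -- the invertible derivative as a continuous linear equiv
  obtain ⟨E, hE, hEsymm⟩ := exists_inv_equiv (fderiv ℝ g ξ₀) (by
    have := hjd ξ₀ hξ₀; rw [jdet] at this; exact this)
  have hstrE : HasStrictFDerivAt g (E : (ℝ×ℝ) →L[ℝ] (ℝ×ℝ)) ξ₀ := by rw [hE]; exact hstrict
  -- local inverse
  set φ := hstrE.localInverse g _ ξ₀ with hφ
  have hφg : φ (g ξ₀) = ξ₀ := hstrE.localInverse_apply_image
  have hφinv : HasFDerivAt φ ((E.symm : (ℝ×ℝ) →L[ℝ] (ℝ×ℝ))) (g ξ₀) :=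
    hstrE.to_localInverse.hasFDerivAt
  -- u agrees with F ∘ φ near g ξ₀
  have hmemU : ∀ᶠ y in nhds (g ξ₀), φ y ∈ U := by
    have hc : ContinuousAt φ (g ξ₀) := hstrE.localInverse_continuousAt
    have : U ∈ nhds (φ (g ξ₀)) := by rw [hφg]; exact hU.mem_nhds hξ₀
    exact hc.eventually_mem this
  have hev : u =ᶠ[nhds (g ξ₀)] ((fun ξ => (1 / jdet g ξ) • fderiv ℝ g ξ (uh ξ)) ∘ φ) := by
    filter_upwards [hmemU, hstrE.eventually_right_inverse] with y hyU hyr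
    have : u (g (φ y)) = (1 / jdet g (φ y)) • fderiv ℝ g (φ y) (uh (φ y)) := hu _ hyU
    rw [hyr] at this
    simpa [Function.comp] using this
  -- differentiability of u at g ξ₀
  have hFdiff : DifferentiableAt ℝ (fun ξ => (1 / jdet g ξ) • fderiv ℝ g ξ (uh ξ)) ξ₀ := by
    rw [hFeq]; exact hF.differentiableAt
  have hcompdiff : DifferentiableAt ℝ
      ((fun ξ => (1 / jdet g ξ) • fderiv ℝ g ξ (uh ξ)) ∘ φ) (g ξ₀) := by
    refine DifferentiableAt.comp (g ξ₀) ?_ hφinv.differentiableAt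
    rw [hφg]; exact hFdiff
  have hudiff : DifferentiableAt ℝ u (g ξ₀) := by
    rw [hev.differentiableAt_iff]; exact hcompdiff
  refine ⟨hudiff, ?_⟩
  -- the derivative of u
  have hdu : fderiv ℝ u (g ξ₀) =
      (fderiv ℝ (fun ξ => (1 / jdet g ξ) • fderiv ℝ g ξ (uh ξ)) ξ₀).comp
        (E.symm : (ℝ×ℝ) →L[ℝ] (ℝ×ℝ)) := by
    rw [hev.fderiv_eq, fderiv_comp (g ξ₀) (by rw [hφg]; exact hFdiff) hφinv.differentiableAt,
      hφg, hφinv.fderiv]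
  -- compute the divergence
  rw [div2, div2, hdu, hFeq, hF.fderiv]
  simp only [ContinuousLinearMap.coe_comp', Function.comp_apply]
  set z1 : ℝ × ℝ := ((jdet g ξ₀)⁻¹ * (fderiv ℝ g ξ₀ (0,1)).2,
    (jdet g ξ₀)⁻¹ * -((fderiv ℝ g ξ₀ (1,0)).2)) with hz1
  set z2 : ℝ × ℝ := ((jdet g ξ₀)⁻¹ * -((fderiv ℝ g ξ₀ (0,1)).1),
    (jdet g ξ₀)⁻¹ * (fderiv ℝ g ξ₀ (1,0)).1) with hz2
  have hB1 : (E.symm : (ℝ×ℝ) →L[ℝ] (ℝ×ℝ)) (1,0) = z1 := by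
    rw [hEsymm, hz1]; simp [jdet, Prod.ext_iff]
  have hB2 : (E.symm : (ℝ×ℝ) →L[ℝ] (ℝ×ℝ)) (0,1) = z2 := by
    rw [hEsymm, hz2]; simp [jdet, Prod.ext_iff]
  rw [hB1, hB2]
  simp only [ContinuousLinearMap.prod_apply, ContinuousLinearMap.add_apply,
    ContinuousLinearMap.smul_apply, ContinuousLinearMap.coe_comp', ContinuousLinearMap.coe_fst',
    ContinuousLinearMap.coe_snd', Function.comp_apply, ContinuousLinearMap.apply_apply,
    ContinuousLinearMap.smulRight_apply, ContinuousLinearMap.one_apply, smul_eq_mul,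
    ContinuousLinearMap.sub_apply, ContinuousLinearMap.toSpanSingleton_apply]
  rw [clm_decomp (fderiv ℝ uh ξ₀) z1, clm_decomp (fderiv ℝ uh ξ₀) z2,
      clm_decomp (fderiv ℝ (fderiv ℝ g) ξ₀) z1, clm_decomp (fderiv ℝ (fderiv ℝ g) ξ₀) z2]
  simp only [ContinuousLinearMap.add_apply, ContinuousLinearMap.smul_apply, smul_eq_mul,
    Prod.smul_fst, Prod.smul_snd, Prod.fst_add, Prod.snd_add, hz1, hz2]
  rw [hsymm (0,1) (1,0)]
  have hJ0' : (fderiv ℝ g ξ₀ (1,0)).1 * (fderiv ℝ g ξ₀ (0,1)).2 -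
      (fderiv ℝ g ξ₀ (1,0)).2 * (fderiv ℝ g ξ₀ (0,1)).1 ≠ 0 := by
    rw [show ((fderiv ℝ g ξ₀ (1,0)).1 * (fderiv ℝ g ξ₀ (0,1)).2 -
      (fderiv ℝ g ξ₀ (1,0)).2 * (fderiv ℝ g ξ₀ (0,1)).1) = jdet g ξ₀ from rfl]
    exact hJ0
  simp only [jdet] at hJ0 ⊢
  have hJ0'' : (fderiv ℝ g ξ₀ (1,0)).1 * (fderiv ℝ g ξ₀ (0,1)).2 -
      (fderiv ℝ g ξ₀ (0,1)).1 * (fderiv ℝ g ξ₀ (1,0)).2 ≠ 0 := by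
    rw [mul_comm ((fderiv ℝ g ξ₀ (0,1)).1)]; exact hJ0
  field_simp
  ring
end
end

section
/- Let U ⊆ ℝ² be open, let g : U → ℝ² be a C¹ diffeomorphism onto its open image with det Dg(ξ) ≠ 0 on U, let û : U → ℝ² be continuous, and define u on g(U) by the Piola transformation u(g(ξ)) = (1 / det Dg(ξ)) Dg(ξ) û(ξ). Then for every C¹ curve ξ : [0,1] → U, the fluxes agree: ∫₀¹ det₂(û(ξ(s)), ξ'(s)) ds = ∫₀¹ det₂(u(g(ξ(s))), (g ∘ ξ)'(s)) ds, where det₂((a₁,a₂),(b₁,b₂)) = a₁ b₂ − a₂ b₁. -/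
open MeasureTheory

noncomputable section

/-- `det₂((a₁,a₂),(b₁,b₂)) = a₁ b₂ − a₂ b₁`. -/
def det2 (a b : ℝ × ℝ) : ℝ := a.1 * b.2 - a.2 * b.1

lemma det2_clm (A : (ℝ × ℝ) →L[ℝ] (ℝ × ℝ)) (v w : ℝ × ℝ) :
    det2 (A v) (A w) =
      (v.1 * w.2 - v.2 * w.1) *
        ((A (1, 0)).1 * (A (0, 1)).2 - (A (1, 0)).2 * (A (0, 1)).1) := by
  have hv : v = v.1 • ((1 : ℝ), (0 : ℝ)) + v.2 • ((0 : ℝ), (1 : ℝ)) := by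
    simp [Prod.ext_iff]
  have hw : w = w.1 • ((1 : ℝ), (0 : ℝ)) + w.2 • ((0 : ℝ), (1 : ℝ)) := by
    simp [Prod.ext_iff]
  rw [hv, hw, map_add, map_add, _root_.map_smul, _root_.map_smul, _root_.map_smul, _root_.map_smul]
  simp only [det2, Prod.fst_add, Prod.snd_add, Prod.smul_fst, Prod.smul_snd,
    smul_eq_mul]
  ring

/-- **The Piola transformation preserves flux integrals.**
Let `g` be a `C¹` diffeomorphism of an open `U ⊆ ℝ²` onto its open image with
`det Dg ≠ 0` on `U`, `û` continuous on `U`, and define `u` on `g(U)` by the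
Piola transformation `u(g ξ) = (1 / det Dg ξ) • Dg ξ (û ξ)`. Then for every
`C¹` curve `c : [0,1] → U`, the flux of `û` across `c` equals the flux of `u`
across `g ∘ c`:
`∫₀¹ det₂(û(c s), c' s) ds = ∫₀¹ det₂(u(g(c s)), (g ∘ c)'(s)) ds`. -/
theorem piola_preserves_flux
    (U : Set (ℝ × ℝ)) (hU : IsOpen U)
    (g : ℝ × ℝ → ℝ × ℝ) (hg : ContDiffOn ℝ 1 g U)
    (hg_inj : Set.InjOn g U)
    (hjd : ∀ ξ ∈ U, jdet g ξ ≠ 0)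
    (uh : ℝ × ℝ → ℝ × ℝ) (huh : ContinuousOn uh U)
    (u : ℝ × ℝ → ℝ × ℝ)
    (hu : ∀ ξ ∈ U, u (g ξ) = (1 / jdet g ξ) • fderiv ℝ g ξ (uh ξ))
    (c : ℝ → ℝ × ℝ) (c' : ℝ → ℝ × ℝ)
    (hc : ∀ s ∈ Set.Icc (0 : ℝ) 1, HasDerivAt c (c' s) s)
    (hc' : ContinuousOn c' (Set.Icc (0 : ℝ) 1))
    (hcU : ∀ s ∈ Set.Icc (0 : ℝ) 1, c s ∈ U) :
    ∫ s in (0 : ℝ)..1, det2 (uh (c s)) (c' s) =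
      ∫ s in (0 : ℝ)..1, det2 (u (g (c s))) (deriv (g ∘ c) s) := by
  apply intervalIntegral.integral_congr
  intro s hs
  rw [Set.uIcc_of_le (by norm_num : (0:ℝ) ≤ 1)] at hs
  have hξU : c s ∈ U := hcU s hs
  have hgd : DifferentiableAt ℝ g (c s) :=
    (hg.contDiffAt (hU.mem_nhds hξU)).differentiableAt one_ne_zero
  have hchain : HasDerivAt (g ∘ c) (fderiv ℝ g (c s) (c' s)) s :=
    hgd.hasFDerivAt.comp_hasDerivAt s (hc s hs)
  show det2 (uh (c s)) (c' s) = det2 (u (g (c s))) (deriv (g ∘ c) s)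
  rw [hchain.deriv, hu (c s) hξU]
  have hJ := hjd (c s) hξU
  set A := fderiv ℝ g (c s)
  have h1 : det2 ((1 / jdet g (c s)) • A (uh (c s))) (A (c' s)) =
      (1 / jdet g (c s)) * det2 (A (uh (c s))) (A (c' s)) := by
    simp [det2]; ring
  rw [h1, det2_clm]
  have : (A (1, 0)).1 * (A (0, 1)).2 - (A (1, 0)).2 * (A (0, 1)).1 = jdet g (c s) := rfl
  rw [this]
  field_simp [det2]
  rfl
end
end
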